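/- arXiv:0812.0609 — 10 statements merged into one kernel-verified Lean document; each statement's English description precedes it below -/
import Mathlib

section
/- Let b, c ∈ k satisfy b³ = c³ = 1. In the free associative algebra k⟨x,y,z⟩, the following identity holds: (y·z + b·z·y + c·x²) + b·(z·x + b·x·z + c·y²) + c·(x·y + b·y·x + c·z²) = (x + b·y + b·c²·z)·(c·x + c·y + b²·z). -/
/-!
STATEMENT 1: For `b, c ∈ k` with `b³ = c³ = 1`, in the free algebra `k⟨x,y,z⟩` one has
`(y·z + b·z·y + c·x²) + b·(z·x + b·x·z + c·y²) + c·(x·y + b·y·x + c·z²)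
  = (x + b·y + b·c²·z)·(c·x + c·y + b²·z)`.
-/

noncomputable section

/-- The free algebra `k⟨x,y,z⟩` on three generators. -/
abbrev FreeAlg (k : Type*) [CommSemiring k] := FreeAlgebra k (Fin 3)

/-- The generators `x = Xg k 0`, `y = Xg k 1`, `z = Xg k 2`. -/
def Xg (k : Type*) [CommSemiring k] (i : Fin 3) : FreeAlg k := FreeAlgebra.ι k i

theorem sum_of_relations_factors
    (k : Type*) [Field k] [IsAlgClosed k] [CharZero k]
    (b c : k) (hb : b ^ 3 = 1) (hc : c ^ 3 = 1) :
    (Xg k 1 * Xg k 2 + b • (Xg k 2 * Xg k 1) + c • (Xg k 0 * Xg k 0))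
      + b • (Xg k 2 * Xg k 0 + b • (Xg k 0 * Xg k 2) + c • (Xg k 1 * Xg k 1))
      + c • (Xg k 0 * Xg k 1 + b • (Xg k 1 * Xg k 0) + c • (Xg k 2 * Xg k 2))
      = (Xg k 0 + b • Xg k 1 + (b * c ^ 2) • Xg k 2)
          * (c • Xg k 0 + c • Xg k 1 + (b ^ 2) • Xg k 2) := by
  simp only [smul_add, mul_add, add_mul, smul_mul_assoc, mul_smul_comm, smul_smul]
  match_scalars <;> (try ring) <;> simp [hb, hc]

end
end

section
/- Let [a:b:c] ∈ 𝔇. Then the degenerate Sklyanin algebra S(a,b,c) is not a domain: there exist nonzero elements u, v ∈ S(a,b,c) with u·v = 0 (indeed u and v can be taken to be the images of nonzero linear forms in x, y, z). -/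
/-!
STATEMENT 2: For `[a:b:c] ∈ 𝔇`, the degenerate Sklyanin algebra `S(a,b,c)` is not a
domain: there exist nonzero `u, v ∈ S(a,b,c)` with `u·v = 0`; indeed `u` and `v` can be
taken to be the images of (nonzero) linear forms in `x, y, z`.
-/

noncomputable section

/-- The defining relations of the Sklyanin algebra `S(a,b,c)`. -/
inductive SklRel (k : Type*) [CommSemiring k] (a b c : k) : FreeAlg k → FreeAlg k → Prop
  | f1 : SklRel k a b c
      (a • (Xg k 1 * Xg k 2) + b • (Xg k 2 * Xg k 1) + c • (Xg k 0 * Xg k 0)) 0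
  | f2 : SklRel k a b c
      (a • (Xg k 2 * Xg k 0) + b • (Xg k 0 * Xg k 2) + c • (Xg k 1 * Xg k 1)) 0
  | f3 : SklRel k a b c
      (a • (Xg k 0 * Xg k 1) + b • (Xg k 1 * Xg k 0) + c • (Xg k 2 * Xg k 2)) 0

/-- The three-dimensional Sklyanin algebra `S(a,b,c)`. -/
abbrev Sklyanin (k : Type*) [CommSemiring k] (a b c : k) := RingQuot (SklRel k a b c)

/-- The quotient map `k⟨x,y,z⟩ → S(a,b,c)`. -/
def sklQuot (k : Type*) [CommSemiring k] (a b c : k) :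
    FreeAlg k →ₐ[k] Sklyanin k a b c :=
  RingQuot.mkAlgHom k (SklRel k a b c)

/-- The span of the words of length `d` in `x, y, z`; `wordSpan k 1` is the space of
linear forms. -/
def wordSpan (k : Type*) [CommSemiring k] (d : ℕ) : Submodule k (FreeAlg k) :=
  Submodule.span k { w | ∃ f : Fin d → Fin 3, w = (List.ofFn fun i => Xg k (f i)).prod }

/-- `[a:b:c] ∈ 𝔇`. -/
def IsDegenerate {k : Type*} [CommSemiring k] (a b c : k) : Prop :=
  ((a ≠ 0 ∧ b = 0 ∧ c = 0) ∨ (a = 0 ∧ b ≠ 0 ∧ c = 0) ∨ (a = 0 ∧ b = 0 ∧ c ≠ 0)) ∨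
    (a ^ 3 = b ^ 3 ∧ b ^ 3 = c ^ 3 ∧ a * b * c ≠ 0)

-- Auxiliary lemmas

lemma Xg_mem_wordSpan (k : Type*) [CommSemiring k] (i : Fin 3) : Xg k i ∈ wordSpan k 1 :=
  Submodule.subset_span ⟨fun _ => i, by simp⟩

lemma lin_mem_wordSpan (k : Type*) [CommSemiring k] (p q r : k) :
    p • Xg k 0 + q • Xg k 1 + r • Xg k 2 ∈ wordSpan k 1 :=
  Submodule.add_mem _ (Submodule.add_mem _
    (Submodule.smul_mem _ _ (Xg_mem_wordSpan k 0))
    (Submodule.smul_mem _ _ (Xg_mem_wordSpan k 1)))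
    (Submodule.smul_mem _ _ (Xg_mem_wordSpan k 2))

/-- Any linear form with a "witness vector" pairing nontrivially is nonzero in the
quotient, via the representation `x ↦ v 0 • ε, y ↦ v 1 • ε, z ↦ v 2 • ε` into the dual
numbers, which kills all the relations since `ε² = 0`. -/
lemma sklQuot_lin_ne_zero (k : Type*) [Field k] (a b c p q r : k)
    (v : Fin 3 → k) (h : p * v 0 + q * v 1 + r * v 2 ≠ 0) :
    sklQuot k a b c (p • Xg k 0 + q • Xg k 1 + r • Xg k 2) ≠ 0 := by
  have hfac : ∀ ⦃x y : FreeAlg k⦄, SklRel k a b c x y →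
      (FreeAlgebra.lift k (fun i => (v i) • (DualNumber.eps : DualNumber k))) x =
      (FreeAlgebra.lift k (fun i => (v i) • (DualNumber.eps : DualNumber k))) y := by
    intro x y r
    induction r <;> simp [Xg, smul_mul_smul_comm]
  set φ := RingQuot.liftAlgHom (S := k) ⟨_, hfac⟩ with hφ
  intro h0
  have h1 := congrArg φ h0
  rw [sklQuot, hφ, RingQuot.liftAlgHom_mkAlgHom_apply] at h1
  simp only [map_add, map_smul, map_zero, FreeAlgebra.lift_ι_apply, Xg, smul_smul] at h1
  rw [← add_smul, ← add_smul] at h1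
  have h2 := congrArg TrivSqZeroExt.snd h1
  simp at h2
  exact h (by linear_combination h2)

lemma sklQuot_Xg_ne_zero (k : Type*) [Field k] (a b c : k) (i : Fin 3) :
    sklQuot k a b c (Xg k i) ≠ 0 := by
  fin_cases i
  · simpa using sklQuot_lin_ne_zero k a b c 1 0 0 ![1, 0, 0] (by norm_num)
  · simpa using sklQuot_lin_ne_zero k a b c 0 1 0 ![0, 1, 0] (by norm_num)
  · simpa using sklQuot_lin_ne_zero k a b c 0 0 1 ![0, 0, 1]
      (by show (0:k) * 0 + 0 * 0 + 1 * 1 ≠ 0; norm_num)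

lemma sklQuot_f1 (k : Type*) [CommSemiring k] (a b c : k) :
    sklQuot k a b c
      (a • (Xg k 1 * Xg k 2) + b • (Xg k 2 * Xg k 1) + c • (Xg k 0 * Xg k 0)) = 0 := by
  have := RingQuot.mkAlgHom_rel k (SklRel.f1 (k := k) (a := a) (b := b) (c := c))
  simpa [sklQuot] using this

lemma sklQuot_f2 (k : Type*) [CommSemiring k] (a b c : k) :
    sklQuot k a b c
      (a • (Xg k 2 * Xg k 0) + b • (Xg k 0 * Xg k 2) + c • (Xg k 1 * Xg k 1)) = 0 := by
  have := RingQuot.mkAlgHom_rel k (SklRel.f2 (k := k) (a := a) (b := b) (c := c))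
  simpa [sklQuot] using this

lemma sklQuot_f3 (k : Type*) [CommSemiring k] (a b c : k) :
    sklQuot k a b c
      (a • (Xg k 0 * Xg k 1) + b • (Xg k 1 * Xg k 0) + c • (Xg k 2 * Xg k 2)) = 0 := by
  have := RingQuot.mkAlgHom_rel k (SklRel.f3 (k := k) (a := a) (b := b) (c := c))
  simpa [sklQuot] using this

/-- The key identity in the free algebra for the case `a³ = b³ = c³`:
`(acx + bcy + abz)(acx + acy + b²z) = a²c·f₁ + abc·f₂ + ac²·f₃`. -/
lemma key_identity (k : Type*) [Field k] (a b c : k) (ha : a ^ 3 = b ^ 3)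
    (hb : b ^ 3 = c ^ 3) :
    ((a*c) • Xg k 0 + (b*c) • Xg k 1 + (a*b) • Xg k 2) *
      ((a*c) • Xg k 0 + (a*c) • Xg k 1 + (b*b) • Xg k 2)
    = (a*a*c) • (a • (Xg k 1 * Xg k 2) + b • (Xg k 2 * Xg k 1) + c • (Xg k 0 * Xg k 0))
    + (a*b*c) • (a • (Xg k 2 * Xg k 0) + b • (Xg k 0 * Xg k 2) + c • (Xg k 1 * Xg k 1))
    + (a*c*c) • (a • (Xg k 0 * Xg k 1) + b • (Xg k 1 * Xg k 0) + c • (Xg k 2 * Xg k 2)) := by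
  have h1 : b ^ 3 = a ^ 3 := ha.symm
  have h2 : c ^ 3 = a ^ 3 := (ha.trans hb).symm
  simp only [mul_add, add_mul, smul_add, smul_smul, smul_mul_assoc, mul_smul_comm]
  match_scalars
  all_goals (try ring1)
  all_goals (try linear_combination c * h1)
  all_goals (try linear_combination a * h1 - a * h2)

theorem degenerate_sklyanin_not_domain
    (k : Type*) [Field k] [IsAlgClosed k] [CharZero k]
    (a b c : k) (h : IsDegenerate a b c) :
    ∃ u v : FreeAlg k, u ∈ wordSpan k 1 ∧ v ∈ wordSpan k 1 ∧
      sklQuot k a b c u ≠ 0 ∧ sklQuot k a b c v ≠ 0 ∧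
      sklQuot k a b c u * sklQuot k a b c v = 0 := by
  obtain (⟨ha, hb, hc⟩ | ⟨ha, hb, hc⟩ | ⟨ha, hb, hc⟩) | ⟨h3, h3', habc⟩ := h
  · -- a ≠ 0, b = c = 0 : y·z = 0
    refine ⟨Xg k 1, Xg k 2, Xg_mem_wordSpan k 1, Xg_mem_wordSpan k 2,
      sklQuot_Xg_ne_zero k a b c 1, sklQuot_Xg_ne_zero k a b c 2, ?_⟩
    subst hb; subst hc
    have h0 := sklQuot_f1 k a 0 0
    simp only [map_add, map_smul, zero_smul, add_zero, smul_eq_zero] at h0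
    rw [← map_mul]
    exact h0.resolve_left ha
  · -- b ≠ 0 : z·y = 0
    refine ⟨Xg k 2, Xg k 1, Xg_mem_wordSpan k 2, Xg_mem_wordSpan k 1,
      sklQuot_Xg_ne_zero k a b c 2, sklQuot_Xg_ne_zero k a b c 1, ?_⟩
    subst ha; subst hc
    have h0 := sklQuot_f1 k 0 b 0
    simp only [map_add, map_smul, zero_smul, add_zero, zero_add, smul_eq_zero] at h0
    rw [← map_mul]
    exact h0.resolve_left hb
  · -- c ≠ 0 : x·x = 0
    refine ⟨Xg k 0, Xg k 0, Xg_mem_wordSpan k 0, Xg_mem_wordSpan k 0,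
      sklQuot_Xg_ne_zero k a b c 0, sklQuot_Xg_ne_zero k a b c 0, ?_⟩
    subst ha; subst hb
    have h0 := sklQuot_f1 k 0 0 c
    simp only [map_add, map_smul, zero_smul, zero_add, smul_eq_zero] at h0
    rw [← map_mul]
    exact h0.resolve_left hc
  · -- a³ = b³ = c³, abc ≠ 0
    have ha : a ≠ 0 := fun h0 => habc (by simp [h0])
    have hc : c ≠ 0 := fun h0 => habc (by simp [h0])
    refine ⟨(a*c) • Xg k 0 + (b*c) • Xg k 1 + (a*b) • Xg k 2,
      (a*c) • Xg k 0 + (a*c) • Xg k 1 + (b*b) • Xg k 2,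
      lin_mem_wordSpan k _ _ _, lin_mem_wordSpan k _ _ _,
      sklQuot_lin_ne_zero k a b c _ _ _ ![1, 0, 0]
        (by simpa using mul_ne_zero ha hc),
      sklQuot_lin_ne_zero k a b c _ _ _ ![1, 0, 0]
        (by simpa using mul_ne_zero ha hc), ?_⟩
    rw [← map_mul, key_identity k a b c h3 h3', map_add, map_add,
      map_smul, map_smul, map_smul, sklQuot_f1, sklQuot_f2, sklQuot_f3]
    simp


end
end

section
/- Let [a:b:c] ∈ 𝔇. Then the degenerate Sklyanin algebra S(a,b,c) is not left Noetherian and not right Noetherian: S(a,b,c) is not Noetherian as a left module over itself, and not Noetherian as a right module over itself. -/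
/-!
STATEMENT 3: For `[a:b:c] ∈ 𝔇`, the degenerate Sklyanin algebra `S(a,b,c)` is not left
Noetherian and not right Noetherian: it is not Noetherian as a left module over itself,
nor as a right module over itself (i.e. `S(a,b,c)ᵐᵒᵖ` is not Noetherian over itself).
-/

noncomputable section

namespace SkAux

universe u v

variable {k : Type u} [Field k]

/-- The weighted shift operator on `ℕ →₀ k`. -/
def shiftOp (w : ℕ → k) : Module.End k (ℕ →₀ k) :=
  Finsupp.lsum k (fun j => w j • (Finsupp.lsingle (j + 1) : k →ₗ[k] ℕ →₀ k))

lemma shiftOp_single (w : ℕ → k) (j : ℕ) (t : k) :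
    shiftOp w (Finsupp.single j t) = Finsupp.single (j + 1) (w j * t) := by
  simp [shiftOp, Finsupp.lsum_single, Finsupp.smul_single, smul_eq_mul]

/-- The representation of the free algebra determined by three weight sequences. -/
def rep (Wt : Fin 3 → ℕ → k) : FreeAlg k →ₐ[k] Module.End k (ℕ →₀ k) :=
  FreeAlgebra.lift k (fun i => shiftOp (Wt i))

lemma rep_Xg (Wt : Fin 3 → ℕ → k) (i : Fin 3) : rep Wt (Xg k i) = shiftOp (Wt i) :=
  FreeAlgebra.lift_ι_apply _ _

lemma comb_zero (a b c : k) (v w u : ℕ → k)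
    (h : ∀ j, a * (v (j+1) * w j) + b * (w (j+1) * v j) + c * (u (j+1) * u j) = 0) :
    a • (shiftOp v * shiftOp w) + b • (shiftOp w * shiftOp v) + c • (shiftOp u * shiftOp u)
      = (0 : Module.End k (ℕ →₀ k)) := by
  refine Finsupp.lhom_ext fun j t => ?_
  simp only [LinearMap.add_apply, LinearMap.smul_apply, Module.End.mul_apply, shiftOp_single,
    Finsupp.smul_single, smul_eq_mul, LinearMap.zero_apply]
  rw [← Finsupp.single_add, ← Finsupp.single_add, Finsupp.single_eq_zero]
  linear_combination t * h j

lemma rep_rel (a b c : k) (Wt : Fin 3 → ℕ → k)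
    (h1 : ∀ j, a * (Wt 1 (j+1) * Wt 2 j) + b * (Wt 2 (j+1) * Wt 1 j)
        + c * (Wt 0 (j+1) * Wt 0 j) = 0)
    (h2 : ∀ j, a * (Wt 2 (j+1) * Wt 0 j) + b * (Wt 0 (j+1) * Wt 2 j)
        + c * (Wt 1 (j+1) * Wt 1 j) = 0)
    (h3 : ∀ j, a * (Wt 0 (j+1) * Wt 1 j) + b * (Wt 1 (j+1) * Wt 0 j)
        + c * (Wt 2 (j+1) * Wt 2 j) = 0) :
    ∀ ⦃x y⦄, SklRel k a b c x y → rep Wt x = rep Wt y := by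
  intro x y r
  cases r with
  | f1 =>
      simp only [map_add, map_smul, map_mul, map_zero, rep_Xg]
      exact comb_zero a b c (Wt 1) (Wt 2) (Wt 0) h1
  | f2 =>
      simp only [map_add, map_smul, map_mul, map_zero, rep_Xg]
      exact comb_zero a b c (Wt 2) (Wt 0) (Wt 1) h2
  | f3 =>
      simp only [map_add, map_smul, map_mul, map_zero, rep_Xg]
      exact comb_zero a b c (Wt 0) (Wt 1) (Wt 2) h3

section Words

variable (G : ZMod 3 → FreeAlg k)

/-- The product of letters of a list, the head being applied first. -/
def eltOf : List (ZMod 3) → FreeAlg k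
  | [] => 1
  | m :: r => eltOf r * G m

variable (E : ℕ → ZMod 3) (C : k)

/-- The scalar by which a word acts on a path module. -/
def scalAux : ℕ → List (ZMod 3) → k
  | _, [] => 1
  | p, m :: r => scalAux (p + 1) r * (if E p = m then C else 0)

lemma eval_eltOf (Wt : Fin 3 → ℕ → k)
    (hG : ∀ m, rep Wt (G m) = shiftOp (fun j => if E j = m then C else 0)) :
    ∀ (l : List (ZMod 3)) (p : ℕ) (t : k),
      rep Wt (eltOf G l) (Finsupp.single p t)
        = Finsupp.single (p + l.length) (scalAux E C p l * t) := by
  intro l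
  induction l with
  | nil => intro p t; simp [eltOf, scalAux]
  | cons m r ih =>
      intro p t
      show rep Wt (eltOf G r * G m) _ = _
      rw [map_mul, Module.End.mul_apply, hG m, shiftOp_single, ih]
      rw [show p + 1 + r.length = p + (m :: r).length by simp; omega]
      rw [show scalAux E C (p+1) r * ((if E p = m then C else 0) * t)
            = scalAux E C p (m :: r) * t by rw [scalAux]; ring]

lemma scalAux_match :
    ∀ (l : List (ZMod 3)) (p : ℕ),
      (∀ t (ht : t < l.length), l[t] = E (p + t)) → scalAux E C p l = C ^ l.length := by
  intro l
  induction l with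
  | nil => intro p _; simp [scalAux]
  | cons m r ih =>
      intro p h
      rw [scalAux, ih (p+1) (fun t ht => by
        have := h (t+1) (by simpa using Nat.succ_lt_succ ht)
        simpa [Nat.add_assoc, Nat.add_comm 1 t] using this)]
      have h0 := h 0 (by simp)
      simp only [List.getElem_cons_zero, Nat.add_zero] at h0
      rw [if_pos h0.symm]
      simp [pow_succ]

lemma scalAux_kill :
    ∀ (l : List (ZMod 3)) (p t : ℕ) (ht : t < l.length),
      l[t] ≠ E (p + t) → scalAux E C p l = 0 := by
  intro l
  induction l with
  | nil => intro p t ht; simp at ht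
  | cons m r ih =>
      intro p t ht hne
      cases t with
      | zero =>
          simp only [List.getElem_cons_zero, Nat.add_zero] at hne
          rw [scalAux, if_neg (fun hh => hne hh.symm), mul_zero]
      | succ s =>
          rw [scalAux, ih (p+1) s (by simpa using Nat.lt_of_succ_lt_succ ht) (by
            simpa [Nat.add_assoc, Nat.add_comm 1 s] using hne), zero_mul]

end Words

section Combinatorics

/-- The base word. -/
def uw (δ : ZMod 3) (t : ℕ) : ZMod 3 := (δ + 1) * (t : ZMod 3)

/-- The witness words (in applied order). -/
def Aw (δ : ZMod 3) (i : ℕ) : List (ZMod 3) :=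
  (List.range (2*i+2)).map fun t => if t = 2*i+1 then uw δ t + 1 else uw δ t

/-- The path word used for the `n`-th representation. -/
def Ew (δ : ZMod 3) (n : ℕ) (j : ℕ) : ZMod 3 :=
  uw δ j + (if j = 2*n+3 then 1 else if j = 2*n+4 then 2 else 0)

lemma Ew_valid (δ : ZMod 3) (n : ℕ) : ∀ j, Ew δ n (j+1) ≠ Ew δ n j + δ := by
  intro j h
  unfold Ew uw at h
  push_cast at h
  split_ifs at h <;> try omega
  all_goals first
    | (exact absurd (by linear_combination h) (by decide : ¬ ((1:ZMod 3) = 0)))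
    | (exact absurd (by linear_combination h) (by decide : ¬ ((2:ZMod 3) = 0)))
    | (exact absurd (by linear_combination -h) (by decide : ¬ ((1:ZMod 3) = 0)))
    | (exact absurd (by linear_combination -h) (by decide : ¬ ((2:ZMod 3) = 0)))

lemma Aw_length (δ : ZMod 3) (i : ℕ) : (Aw δ i).length = 2*i+2 := by simp [Aw]

lemma Aw_get (δ : ZMod 3) (i t : ℕ) (ht : t < (Aw δ i).length) :
    (Aw δ i)[t] = if t = 2*i+1 then uw δ t + 1 else uw δ t := by
  simp [Aw]

lemma Aw_alive (δ : ZMod 3) (n : ℕ) :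
    ∀ t (ht : t < (Aw δ (n+1)).length), (Aw δ (n+1))[t] = Ew δ n (0 + t) := by
  intro t ht
  have htl : t < 2*(n+1)+2 := by simpa [Aw_length] using ht
  rw [Aw_get δ (n+1) t ht]
  unfold Ew
  rcases eq_or_ne t (2*(n+1)+1) with h | h
  · rw [if_pos h, if_pos (by omega), Nat.zero_add]
  · rw [if_neg h, if_neg (by omega), if_neg (by omega), Nat.zero_add, add_zero]

lemma Aw_dead (δ : ZMod 3) (n i : ℕ) (hi : i ≤ n) :
    (Aw δ i)[2*i+1]'(by rw [Aw_length]; omega) ≠ Ew δ n (0 + (2*i+1)) := by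
  rw [Aw_get δ i _ (by rw [Aw_length]; omega)]
  rw [if_pos rfl]
  unfold Ew
  rw [if_neg (by omega), if_neg (by omega), Nat.zero_add, add_zero]
  intro h
  exact absurd (by linear_combination h) (by decide : ¬ ((1:ZMod 3) = 0))

end Combinatorics

/-- Key abstract lemma: a ring with such a sequence of elements is not left noetherian. -/
lemma not_noeth (k : Type u) [Field k] {R : Type v} [Ring R] (w : ℕ → R)
    (H : ∀ n : ℕ, ∃ ρ : R →+* Module.End k (ℕ →₀ k),
      (∀ i, i ≤ n → ρ (w i) (Finsupp.single 0 1) = 0) ∧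
        ρ (w (n+1)) (Finsupp.single 0 1) ≠ 0) :
    ¬ IsNoetherian R R := by
  intro hN
  have hmono : Monotone fun n : ℕ => Submodule.span R (w '' Set.Iic n) := by
    intro m n hmn
    exact Submodule.span_mono (Set.image_mono (Set.Iic_subset_Iic.mpr (by exact_mod_cast hmn)))
  obtain ⟨n, hn⟩ := monotone_stabilizes_iff_noetherian.mpr hN
    ⟨fun n : ℕ => Submodule.span R (w '' Set.Iic n), hmono⟩
  have hmem : w (n+1) ∈ Submodule.span R (w '' Set.Iic n) := by
    have h1 : w (n+1) ∈ Submodule.span R (w '' Set.Iic (n+1)) :=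
      Submodule.subset_span ⟨n+1, Set.self_mem_Iic, rfl⟩
    have h2 := hn (n+1) (Nat.le_succ n)
    simp only [OrderHom.coe_mk] at h2
    rw [h2]; exact h1
  obtain ⟨ρ, hkill, hlive⟩ := H n
  apply hlive
  have key : ∀ v ∈ Submodule.span R (w '' Set.Iic n), ρ v (Finsupp.single 0 1) = 0 := by
    intro v hv
    induction hv using Submodule.span_induction with
    | mem x hx => obtain ⟨i, hi, rfl⟩ := hx; exact hkill i hi
    | zero => simp
    | add x y _ _ hx hy => rw [map_add, LinearMap.add_apply, hx, hy, add_zero]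
    | smul r x _ hx => rw [smul_eq_mul, map_mul, Module.End.mul_apply, hx, map_zero]
  exact key _ hmem

/-- Master lemma: given suitable representations, the Sklyanin algebra is not noetherian. -/
lemma master (a b c : k) (δ : ZMod 3) (G : ZMod 3 → FreeAlg k) (C : k) (hC : C ≠ 0)
    (H : ∀ n : ℕ, ∃ Wt : Fin 3 → ℕ → k,
      (∀ ⦃x y⦄, SklRel k a b c x y → rep Wt x = rep Wt y) ∧
      (∀ m, rep Wt (G m) = shiftOp (fun j => if Ew δ n j = m then C else 0))) :
    ¬ IsNoetherianRing (Sklyanin k a b c) := by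
  rw [isNoetherianRing_iff]
  apply not_noeth k
    (w := fun i => RingQuot.mkAlgHom k (SklRel k a b c) (eltOf G (Aw δ i)))
  intro n
  obtain ⟨Wt, hresp, hG⟩ := H n
  refine ⟨(RingQuot.liftAlgHom k ⟨rep Wt, hresp⟩).toRingHom, ?_, ?_⟩
  · intro i hi
    show (RingQuot.liftAlgHom k ⟨rep Wt, hresp⟩) (RingQuot.mkAlgHom k _ _) _ = 0
    rw [RingQuot.liftAlgHom_mkAlgHom_apply,
      eval_eltOf G (Ew δ n) C Wt hG (Aw δ i) 0 1,
      scalAux_kill (Ew δ n) C (Aw δ i) 0 (2*i+1) (by rw [Aw_length]; omega)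
        (Aw_dead δ n i hi), zero_mul, Finsupp.single_zero]
  · show (RingQuot.liftAlgHom k ⟨rep Wt, hresp⟩) (RingQuot.mkAlgHom k _ _) _ ≠ 0
    rw [RingQuot.liftAlgHom_mkAlgHom_apply,
      eval_eltOf G (Ew δ n) C Wt hG (Aw δ (n+1)) 0 1,
      scalAux_match (Ew δ n) C (Aw δ (n+1)) 0 (Aw_alive δ n), mul_one]
    simp only [ne_eq, Finsupp.single_eq_zero]
    exact pow_ne_zero _ hC


section Omega

variable (ω : k)

/-- `ω` raised to a `ZMod 3` exponent. -/
def Om (m : ZMod 3) : k := ω ^ m.val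

lemma pow_mod3 (hω3 : ω ^ 3 = 1) (n : ℕ) : ω ^ n = ω ^ (n % 3) := by
  conv_lhs => rw [← Nat.div_add_mod n 3]
  rw [pow_add, pow_mul, hω3, one_pow, one_mul]

lemma Om_add (hω3 : ω ^ 3 = 1) (x y : ZMod 3) : Om ω (x + y) = Om ω x * Om ω y := by
  unfold Om
  rw [← pow_add, ZMod.val_add, ← pow_mod3 ω hω3]

lemma Om_two (hω3 : ω ^ 3 = 1) (x : ZMod 3) : Om ω (2 * x) = Om ω x * Om ω x := by
  rw [show (2 : ZMod 3) * x = x + x by ring, Om_add ω hω3]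

lemma Om_zero : Om ω 0 = 1 := by
  show ω ^ (0 : ZMod 3).val = 1
  norm_num

lemma Om_one : Om ω 1 = ω := by
  show ω ^ (1 : ZMod 3).val = ω
  rw [show (1 : ZMod 3).val = 1 by decide, pow_one]

lemma Om_two' : Om ω 2 = ω ^ 2 := by
  show ω ^ (2 : ZMod 3).val = ω ^ 2
  rw [show (2 : ZMod 3).val = 2 by decide]

lemma Om_cube (hω3 : ω ^ 3 = 1) (x : ZMod 3) : Om ω x ^ 3 = 1 := by
  unfold Om
  rw [← pow_mul, mul_comm, pow_mul, hω3, one_pow]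

variable [CharZero k]

lemma Om_ne_one (h1 : ω ^ 2 + ω + 1 = 0) (x : ZMod 3) (hx : x ≠ 0) : Om ω x ≠ 1 := by
  rcases (by decide : ∀ y : ZMod 3, y ≠ 0 → y = 1 ∨ y = 2) x hx with rfl | rfl
  · rw [Om_one]
    intro he
    rw [he] at h1
    norm_num at h1
  · rw [Om_two']
    intro he
    have e : ω = -2 := by linear_combination h1 - he
    rw [e] at he
    norm_num at he

lemma sum3 (x : k) (h3 : x ^ 3 = 1) (hne : x ≠ 1) : 1 + x + x ^ 2 = 0 := by
  rcases mul_eq_zero.mp (show (x - 1) * (1 + x + x ^ 2) = 0 by linear_combination h3) with h | h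
  · exact absurd (by linear_combination h) hne
  · exact h

lemma triple (h1 : ω ^ 2 + ω + 1 = 0) (t w : ZMod 3) (hw : w ≠ 0) :
    Om ω t + Om ω (t + w) + Om ω (t + 2 * w) = 0 := by
  have hω3 : ω ^ 3 = 1 := by linear_combination (ω - 1) * h1
  rw [Om_add ω hω3, Om_add ω hω3, Om_two ω hω3]
  have hs : 1 + Om ω w + Om ω w ^ 2 = 0 :=
    sum3 (Om ω w) (Om_cube ω hω3 w) (Om_ne_one ω h1 w hw)
  linear_combination (Om ω t) * hs

end Omega

section MonoCases

/-- letter index cast -/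
def mc (m : ZMod 3) : Fin 3 := ⟨m.val, ZMod.val_lt m⟩

lemma mc_val (i : Fin 3) : ((mc ((i.val : ℕ) : ZMod 3)).val : ZMod 3) = ((i.val : ℕ) : ZMod 3) := by
  show (((((i.val : ℕ) : ZMod 3)).val : ℕ) : ZMod 3) = _
  exact ZMod.natCast_rightInverse _

lemma monoWt (δ : ZMod 3) (n : ℕ) (m : ZMod 3) :
    rep (fun i j => if Ew δ n j = ((i.val : ℕ) : ZMod 3) then (1:k) else 0) (Xg k (mc m))
      = shiftOp (fun j => if Ew δ n j = m then (1:k) else 0) := by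
  rw [rep_Xg]
  congr 1
  funext j
  rw [show (((mc m).val : ℕ) : ZMod 3) = m from ZMod.natCast_rightInverse m]

lemma ite_prod_zero (P Q : Prop) [Decidable P] [Decidable Q] (h : ¬ (P ∧ Q)) :
    (if P then (1:k) else 0) * (if Q then (1:k) else 0) = 0 := by
  split_ifs with p q
  · exact absurd ⟨p, q⟩ h
  all_goals ring

lemma caseMonoA (a : k) (ha : a ≠ 0) : ¬ IsNoetherianRing (Sklyanin k a 0 0) := by
  apply master a 0 0 (δ := 2) (G := fun m => Xg k (mc m)) (C := (1:k)) one_ne_zero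
  intro n
  refine ⟨fun i j => if Ew 2 n j = ((i.val : ℕ) : ZMod 3) then (1:k) else 0, ?_, monoWt 2 n⟩
  apply rep_rel <;> intro j <;>
    (norm_num; intro hA hB; exfalso; have := Ew_valid 2 n j; rw [hA, hB] at this;
      exact this (by decide))

lemma caseMonoB (b : k) (hb : b ≠ 0) : ¬ IsNoetherianRing (Sklyanin k 0 b 0) := by
  apply master 0 b 0 (δ := 1) (G := fun m => Xg k (mc m)) (C := (1:k)) one_ne_zero
  intro n
  refine ⟨fun i j => if Ew 1 n j = ((i.val : ℕ) : ZMod 3) then (1:k) else 0, ?_, monoWt 1 n⟩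
  apply rep_rel <;> intro j <;>
    (norm_num; intro hA hB; exfalso; have := Ew_valid 1 n j; rw [hA, hB] at this;
      exact this (by decide))

lemma caseMonoC (c : k) (hc : c ≠ 0) : ¬ IsNoetherianRing (Sklyanin k 0 0 c) := by
  apply master 0 0 c (δ := 0) (G := fun m => Xg k (mc m)) (C := (1:k)) one_ne_zero
  intro n
  refine ⟨fun i j => if Ew 0 n j = ((i.val : ℕ) : ZMod 3) then (1:k) else 0, ?_, monoWt 0 n⟩
  apply rep_rel <;> intro j <;>
    (norm_num; intro hA hB; exfalso; have := Ew_valid 0 n j; rw [hA, hB] at this;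
      exact this (by decide))

end MonoCases


section CaseABC

variable [CharZero k] [IsAlgClosed k]

lemma aux1 : ∀ (dz x x' : ZMod 3), x' ≠ x + 2*dz → dz + x' + 2*x ≠ 0 := by decide

lemma aux2 : ∀ (m x : ZMod 3), x ≠ m → 2*m + x ≠ 0 := by decide

lemma caseABC (a b c : k) (h3ab : a^3 = b^3) (h3bc : b^3 = c^3) (habc : a*b*c ≠ 0) :
    ¬ IsNoetherianRing (Sklyanin k a b c) := by
  have ha : a ≠ 0 := fun h => habc (by rw [h]; ring)
  have hc : c ≠ 0 := fun h => habc (by rw [h]; ring)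
  have hc3 : c^3 = a^3 := (h3ab.trans h3bc).symm
  have h3z : (3 : ZMod 3) = 0 := by decide
  obtain ⟨ω, hω⟩ : ∃ ω : k, ω^2 + ω + 1 = 0 := by
    obtain ⟨x, hx⟩ := IsAlgClosed.exists_root
      (p := (Polynomial.X^2 + Polynomial.X + 1 : Polynomial k))
      (by rw [show (Polynomial.X^2+Polynomial.X+1 : Polynomial k).degree = 2 by compute_degree!]
          decide)
    exact ⟨x, by simpa [Polynomial.IsRoot] using hx⟩
  have hω3 : ω^3 = 1 := by linear_combination (ω - 1) * hω
  obtain ⟨dz, hdz⟩ : ∃ dz : ZMod 3, b = Om ω dz * a := by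
    have hfac : (b - a) * ((b - ω*a) * (b - ω^2*a)) = 0 := by
      linear_combination -h3ab + (a^2*b - a*b^2) * hω + (a^2*b - a^3) * hω3
    rcases mul_eq_zero.mp hfac with h | h
    · exact ⟨0, by rw [Om_zero]; linear_combination h⟩
    rcases mul_eq_zero.mp h with h | h
    · exact ⟨1, by rw [Om_one]; linear_combination h⟩
    · exact ⟨2, by rw [Om_two']; linear_combination h⟩
  apply master a b c (δ := 2*dz)
    (G := fun m => (a^2*c) • Xg k 0 + (b^2*c*Om ω (2*m)) • Xg k 1 + (a^3*Om ω m) • Xg k 2)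
    (C := 3*(a^3*c))
    (mul_ne_zero (by norm_num) (mul_ne_zero (pow_ne_zero 3 ha) hc))
  intro n
  set E : ℕ → ZMod 3 := Ew (2*dz) n with hEdef
  have hval : ∀ j, E (j+1) ≠ E j + 2*dz := Ew_valid (2*dz) n
  set Wt : Fin 3 → ℕ → k :=
    ![fun _ => a, fun j => b * Om ω (E j), fun j => c * Om ω (2 * E j)] with hWt
  have H1 : ∀ j, a * ((b * Om ω (E (j+1))) * (c * Om ω (2 * E j)))
      + b * ((c * Om ω (2 * E (j+1))) * (b * Om ω (E j))) + c * (a * a) = 0 := by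
    intro j
    have hw := aux1 dz (E j) (E (j+1)) (hval j)
    have htr := triple ω hω 0 (dz + E (j+1) + 2*E j) hw
    rw [zero_add,
      show dz + E (j+1) + 2*E j = dz + (E (j+1) + 2*E j) from by ring,
      Om_add ω hω3, Om_add ω hω3,
      show (0 : ZMod 3) + 2*(dz + (E (j+1) + 2*E j)) = dz + (dz + (2*E (j+1) + E j))
        from by linear_combination (E j) * h3z,
      Om_add ω hω3, Om_add ω hω3, Om_add ω hω3, Om_zero] at htr
    rw [hdz]
    linear_combination (a^2*c) * htr
  have H2 : ∀ j, a * ((c * Om ω (2 * E (j+1))) * a)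
      + b * (a * (c * Om ω (2 * E j))) + c * ((b * Om ω (E (j+1))) * (b * Om ω (E j))) = 0 := by
    intro j
    have hw := aux1 dz (E j) (E (j+1)) (hval j)
    have htr := triple ω hω (2*E (j+1)) (dz + E (j+1) + 2*E j) hw
    rw [show 2*E (j+1) + (dz + E (j+1) + 2*E j) = dz + 2*E j
        from by linear_combination (E (j+1)) * h3z,
      Om_add ω hω3,
      show 2*E (j+1) + 2*(dz + E (j+1) + 2*E j) = dz + (dz + (E (j+1) + E j))
        from by linear_combination (E (j+1) + E j) * h3z,
      Om_add ω hω3, Om_add ω hω3, Om_add ω hω3] at htr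
    rw [hdz]
    linear_combination (a^2*c) * htr
  have H3 : ∀ j, a * (a * (b * Om ω (E j)))
      + b * ((b * Om ω (E (j+1))) * a) + c * ((c * Om ω (2 * E (j+1))) * (c * Om ω (2 * E j))) = 0 := by
    intro j
    have hw := aux1 dz (E j) (E (j+1)) (hval j)
    have htr := triple ω hω (dz + E j) (dz + E (j+1) + 2*E j) hw
    rw [Om_add ω hω3,
      show dz + E j + (dz + E (j+1) + 2*E j) = dz + (dz + E (j+1))
        from by linear_combination (E j) * h3z,
      Om_add ω hω3, Om_add ω hω3,
      show dz + E j + 2*(dz + E (j+1) + 2*E j) = 2*E (j+1) + 2*E j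
        from by linear_combination (dz + E j) * h3z,
      Om_add ω hω3] at htr
    rw [hdz]
    linear_combination (a^3) * htr + (Om ω (2*E (j+1)) * Om ω (2*E j)) * hc3
  refine ⟨Wt, ?_, ?_⟩
  · exact rep_rel a b c Wt H1 H2 H3
  · intro m
    have r0 : rep Wt (Xg k 0) = shiftOp (fun _ => a) := rep_Xg Wt 0
    have r1 : rep Wt (Xg k 1) = shiftOp (fun j => b * Om ω (E j)) := rep_Xg Wt 1
    have r2 : rep Wt (Xg k 2) = shiftOp (fun j => c * Om ω (2 * E j)) := rep_Xg Wt 2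
    simp only [map_add, map_smul, r0, r1, r2]
    refine Finsupp.lhom_ext fun j t => ?_
    simp only [LinearMap.add_apply, LinearMap.smul_apply, shiftOp_single,
      Finsupp.smul_single, smul_eq_mul]
    rw [← Finsupp.single_add, ← Finsupp.single_add]
    refine congrArg _ ?_
    by_cases hxm : E j = m
    · rw [if_pos hxm, hxm]
      have k1 : Om ω (2*m) * Om ω m = 1 := by
        rw [← Om_add ω hω3, show 2*m + m = (0:ZMod 3) from by linear_combination m * h3z,
          Om_zero]
      linear_combination (-(c*t*Om ω (2*m)*Om ω m)) * h3ab + (2*(a^3*c)*t) * k1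
    · rw [if_neg hxm, zero_mul]
      have hw2 := aux2 m (E j) hxm
      have htr := triple ω hω 0 (2*m + E j) hw2
      rw [zero_add, Om_add ω hω3,
        show (0:ZMod 3) + 2*(2*m + E j) = m + 2*E j from by linear_combination m * h3z,
        Om_add ω hω3, Om_zero] at htr
      linear_combination ((a^3*c)*t) * htr - (c*t*Om ω (2*m)*Om ω (E j)) * h3ab

end CaseABC


section Assembly

lemma deg_not_noeth [CharZero k] [IsAlgClosed k] (a b c : k) (h : IsDegenerate a b c) :
    ¬ IsNoetherianRing (Sklyanin k a b c) := by
  rcases h with (⟨ha, hb, hc⟩ | ⟨ha, hb, hc⟩ | ⟨ha, hb, hc⟩) | ⟨h1, h2, h3⟩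
  · subst hb; subst hc; exact caseMonoA a ha
  · subst ha; subst hc; exact caseMonoB b hb
  · subst ha; subst hb; exact caseMonoC c hc
  · exact caseABC a b c h1 h2 h3

lemma swap_add {M : Type v} [AddCommMonoid M] (u v w : M) (h : v + u + w = 0) :
    u + v + w = 0 := by rwa [add_comm v u] at h

/-- The algebra map `S(a,b,c) → S(b,a,c)ᵐᵒᵖ`. -/
def opAlg (a b c : k) : Sklyanin k a b c →ₐ[k] (Sklyanin k b a c)ᵐᵒᵖ :=
  RingQuot.liftAlgHom k ⟨FreeAlgebra.lift k
      (fun i => MulOpposite.op (RingQuot.mkAlgHom k (SklRel k b a c) (Xg k i))), by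
    intro x y r
    cases r with
    | f1 =>
        simp only [map_add, map_smul, map_mul, map_zero, Xg, FreeAlgebra.lift_ι_apply]
        simp only [← MulOpposite.op_mul, ← MulOpposite.op_smul, ← MulOpposite.op_add,
          MulOpposite.op_eq_zero_iff]
        have h0 := RingQuot.mkAlgHom_rel k (SklRel.f1 (k := k) (a := b) (b := a) (c := c))
        simp only [map_add, map_smul, map_mul, map_zero, Xg] at h0
        exact swap_add _ _ _ h0
    | f2 =>
        simp only [map_add, map_smul, map_mul, map_zero, Xg, FreeAlgebra.lift_ι_apply]
        simp only [← MulOpposite.op_mul, ← MulOpposite.op_smul, ← MulOpposite.op_add,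
          MulOpposite.op_eq_zero_iff]
        have h0 := RingQuot.mkAlgHom_rel k (SklRel.f2 (k := k) (a := b) (b := a) (c := c))
        simp only [map_add, map_smul, map_mul, map_zero, Xg] at h0
        exact swap_add _ _ _ h0
    | f3 =>
        simp only [map_add, map_smul, map_mul, map_zero, Xg, FreeAlgebra.lift_ι_apply]
        simp only [← MulOpposite.op_mul, ← MulOpposite.op_smul, ← MulOpposite.op_add,
          MulOpposite.op_eq_zero_iff]
        have h0 := RingQuot.mkAlgHom_rel k (SklRel.f3 (k := k) (a := b) (b := a) (c := c))
        simp only [map_add, map_smul, map_mul, map_zero, Xg] at h0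
        exact swap_add _ _ _ h0⟩

/-- The ring map `S(a,b,c)ᵐᵒᵖ → S(b,a,c)`. -/
def opRing (a b c : k) : (Sklyanin k a b c)ᵐᵒᵖ →+* Sklyanin k b a c where
  toFun := fun s => ((opAlg a b c) s.unop).unop
  map_one' := by simp
  map_mul' := fun s t => by simp [MulOpposite.unop_mul, map_mul]
  map_zero' := by simp
  map_add' := fun s t => by simp [MulOpposite.unop_add, map_add]

lemma opRing_surj (a b c : k) : Function.Surjective (opRing a b c) := by
  intro s
  obtain ⟨p, rfl⟩ := RingQuot.mkAlgHom_surjective k (SklRel k b a c) s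
  induction p using FreeAlgebra.induction with
  | grade0 r =>
      refine ⟨MulOpposite.op ((algebraMap k (Sklyanin k a b c)) r), ?_⟩
      show ((opAlg a b c) _).unop = _
      rw [MulOpposite.unop_op, AlgHom.commutes]
      simp [MulOpposite.algebraMap_apply, AlgHom.commutes]
  | grade1 i =>
      refine ⟨MulOpposite.op (RingQuot.mkAlgHom k (SklRel k a b c) (Xg k i)), ?_⟩
      show ((opAlg a b c) _).unop = _
      rw [MulOpposite.unop_op, opAlg, RingQuot.liftAlgHom_mkAlgHom_apply]
      simp [Xg, FreeAlgebra.lift_ι_apply]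
  | mul x y ihx ihy =>
      obtain ⟨u, hu⟩ := ihx
      obtain ⟨v, hv⟩ := ihy
      exact ⟨u * v, by rw [map_mul, hu, hv, ← map_mul]⟩
  | add x y ihx ihy =>
      obtain ⟨u, hu⟩ := ihx
      obtain ⟨v, hv⟩ := ihy
      exact ⟨u + v, by rw [map_add, hu, hv, ← map_add]⟩

lemma deg_swap (a b c : k) (h : IsDegenerate a b c) : IsDegenerate b a c := by
  rcases h with (⟨ha, hb, hc⟩ | ⟨ha, hb, hc⟩ | ⟨ha, hb, hc⟩) | ⟨h1, h2, h3⟩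
  · exact Or.inl (Or.inr (Or.inl ⟨hb, ha, hc⟩))
  · exact Or.inl (Or.inl ⟨hb, ha, hc⟩)
  · exact Or.inl (Or.inr (Or.inr ⟨hb, ha, hc⟩))
  · exact Or.inr ⟨h1.symm, h1.trans h2, fun hz => h3 (by rw [show a*b*c = b*a*c by ring, hz])⟩

lemma op_not_noeth [CharZero k] [IsAlgClosed k] (a b c : k) (h : IsDegenerate a b c) :
    ¬ IsNoetherianRing (Sklyanin k a b c)ᵐᵒᵖ := by
  intro hN
  exact deg_not_noeth b a c (deg_swap a b c h)
    (isNoetherianRing_of_surjective _ _ (opRing a b c) (opRing_surj a b c))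

end Assembly

end SkAux

theorem degenerate_sklyanin_not_noetherian
    (k : Type*) [Field k] [IsAlgClosed k] [CharZero k]
    (a b c : k) (h : IsDegenerate a b c) :
    ¬ IsNoetherian (Sklyanin k a b c) (Sklyanin k a b c) ∧
      ¬ IsNoetherian (Sklyanin k a b c)ᵐᵒᵖ (Sklyanin k a b c)ᵐᵒᵖ := by
  exact ⟨fun hh => SkAux.deg_not_noeth a b c h (isNoetherianRing_iff.mpr hh),
    fun hh => SkAux.op_not_noeth a b c h (isNoetherianRing_iff.mpr hh)⟩

end
end

section
/- Let b, c ∈ k satisfy b³ = c³ = 1. Then the Koszul dual of S(1,b,c), namely the quotient of k⟨x,y,z⟩ by the two-sided ideal generated by z² − c·x·y, y·z − c²·x², z·y − b²·y·z, y² − b·c·x·z, z·x − b·x·z, and y·x − b²·x·y, is infinite-dimensional as a k-vector space (it has a basis given by the images of the monomials x^i, x^j·y, x^k·z for i, j, k ∈ ℕ). -/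
/-!
STATEMENT 5: For `b, c ∈ k` with `b³ = c³ = 1`, the Koszul dual of `S(1,b,c)` — the
quotient of `k⟨x,y,z⟩` by the two-sided ideal generated by `z² − c·x·y`, `y·z − c²·x²`,
`z·y − b²·y·z`, `y² − b·c·x·z`, `z·x − b·x·z`, `y·x − b²·x·y` — is infinite-dimensional
over `k`, with basis the images of the monomials `x^i`, `x^j·y`, `x^k·z` (`i,j,k ∈ ℕ`).
-/

noncomputable section

/-- The defining relations of the Koszul dual `S(1,b,c)!`. -/
inductive KDRel (k : Type*) [CommRing k] (b c : k) : FreeAlg k → FreeAlg k → Prop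
  | r1 : KDRel k b c (Xg k 2 * Xg k 2 - c • (Xg k 0 * Xg k 1)) 0
  | r2 : KDRel k b c (Xg k 1 * Xg k 2 - (c ^ 2) • (Xg k 0 * Xg k 0)) 0
  | r3 : KDRel k b c (Xg k 2 * Xg k 1 - (b ^ 2) • (Xg k 1 * Xg k 2)) 0
  | r4 : KDRel k b c (Xg k 1 * Xg k 1 - (b * c) • (Xg k 0 * Xg k 2)) 0
  | r5 : KDRel k b c (Xg k 2 * Xg k 0 - b • (Xg k 0 * Xg k 2)) 0
  | r6 : KDRel k b c (Xg k 1 * Xg k 0 - (b ^ 2) • (Xg k 0 * Xg k 1)) 0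

/-- The Koszul dual `S(1,b,c)!` of the degenerate Sklyanin algebra `S(1,b,c)`. -/
abbrev KoszulDual (k : Type*) [CommRing k] (b c : k) := RingQuot (KDRel k b c)

/-- The quotient map `k⟨x,y,z⟩ → S(1,b,c)!`. -/
def kdQuot (k : Type*) [CommRing k] (b c : k) : FreeAlg k →ₐ[k] KoszulDual k b c :=
  RingQuot.mkAlgHom k (KDRel k b c)

abbrev Idx := ℕ ⊕ ℕ ⊕ ℕ

section Rep
variable {k : Type*} [CommRing k] (b c : k)

abbrev Mdl (k : Type*) [CommRing k] := Idx →₀ k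

def dlt (k : Type*) [CommRing k] (i : Idx) : Mdl k := Finsupp.single i 1

def actVec : Fin 3 → Idx → Mdl k
  | 0, Sum.inl i => dlt k (Sum.inl (i+1))
  | 0, Sum.inr (Sum.inl j) => dlt k (Sum.inr (Sum.inl (j+1)))
  | 0, Sum.inr (Sum.inr l) => dlt k (Sum.inr (Sum.inr (l+1)))
  | 1, Sum.inl i => (b^(2*i)) • dlt k (Sum.inr (Sum.inl i))
  | 1, Sum.inr (Sum.inl j) => (b^(2*j+1) * c) • dlt k (Sum.inr (Sum.inr (j+1)))
  | 1, Sum.inr (Sum.inr l) => (b^(2*l) * c^2) • dlt k (Sum.inl (l+2))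
  | 2, Sum.inl i => (b^i) • dlt k (Sum.inr (Sum.inr i))
  | 2, Sum.inr (Sum.inl j) => (b^(j+2) * c^2) • dlt k (Sum.inl (j+2))
  | 2, Sum.inr (Sum.inr l) => (b^l * c) • dlt k (Sum.inr (Sum.inl (l+1)))

def actMap (g : Fin 3) : Mdl k →ₗ[k] Mdl k :=
  Finsupp.lsum k fun i => LinearMap.toSpanSingleton k (Mdl k) (actVec b c g i)

@[simp] lemma actMap_single (g : Fin 3) (i : Idx) (a : k) :
    actMap b c g (Finsupp.single i a) = a • actVec b c g i := by
  simp [actMap]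

@[simp] lemma actMap_smul (g : Fin 3) (a : k) (m : Mdl k) :
    actMap b c g (a • m) = a • actMap b c g m := map_smul _ _ _

def rep : FreeAlg k →ₐ[k] Module.End k (Mdl k) :=
  FreeAlgebra.lift k (actMap b c)

@[simp] lemma rep_Xg (g : Fin 3) : rep b c (Xg k g) = actMap b c g := by
  simp [rep, Xg]

end Rep

section RelCheck
variable {k : Type*} [CommRing k] (b c : k)

lemma rep_rel (hb : b^3=1) (hc : c^3=1) :
    ∀ {u v : FreeAlg k}, KDRel k b c u v → rep b c u = rep b c v := by
  have h3 : ∀ n : ℕ, b^(3*n) = 1 := fun n => by rw [pow_mul, hb, one_pow]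
  intro u v h
  induction h with
  | r1 =>
    simp only [map_sub, map_mul, map_smul, map_zero, rep_Xg]
    rw [sub_eq_zero]
    refine Finsupp.lhom_ext fun i a => ?_
    rcases i with i | j | l
    · simp only [Module.End.mul_apply, LinearMap.smul_apply, actMap_single, actMap_smul,
        actVec, dlt, smul_smul]; congr 1; ring
    · simp only [Module.End.mul_apply, LinearMap.smul_apply, actMap_single, actMap_smul,
        actVec, dlt, smul_smul]; congr 1; linear_combination a*c^2*b^(2*j+1)*hb
    · simp only [Module.End.mul_apply, LinearMap.smul_apply, actMap_single, actMap_smul,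
        actVec, dlt, smul_smul]; congr 1; linear_combination a*c^3*b^(2*l)*hb
  | r2 =>
    simp only [map_sub, map_mul, map_smul, map_zero, rep_Xg]
    rw [sub_eq_zero]
    refine Finsupp.lhom_ext fun i a => ?_
    rcases i with i | j | l
    · simp only [Module.End.mul_apply, LinearMap.smul_apply, actMap_single, actMap_smul,
        actVec, dlt, smul_smul]; congr 1; linear_combination a*c^2*(h3 i)
    · simp only [Module.End.mul_apply, LinearMap.smul_apply, actMap_single, actMap_smul,
        actVec, dlt, smul_smul]; congr 1; linear_combination a*c^2*(h3 (j+2))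
    · simp only [Module.End.mul_apply, LinearMap.smul_apply, actMap_single, actMap_smul,
        actVec, dlt, smul_smul]; congr 1; linear_combination a*c^2*(h3 (l+1))
  | r3 =>
    simp only [map_sub, map_mul, map_smul, map_zero, rep_Xg]
    rw [sub_eq_zero]
    refine Finsupp.lhom_ext fun i a => ?_
    rcases i with i | j | l
    · simp only [Module.End.mul_apply, LinearMap.smul_apply, actMap_single, actMap_smul,
        actVec, dlt, smul_smul]; congr 1; ring
    · simp only [Module.End.mul_apply, LinearMap.smul_apply, actMap_single, actMap_smul,
        actVec, dlt, smul_smul]; congr 1; linear_combination (-a*c^2*b^(3*j+2)*(b^3+1))*hb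
    · simp only [Module.End.mul_apply, LinearMap.smul_apply, actMap_single, actMap_smul,
        actVec, dlt, smul_smul]; congr 1; linear_combination (-a*c^2*b^(3*l+2))*hb
  | r4 =>
    simp only [map_sub, map_mul, map_smul, map_zero, rep_Xg]
    rw [sub_eq_zero]
    refine Finsupp.lhom_ext fun i a => ?_
    rcases i with i | j | l
    · simp only [Module.End.mul_apply, LinearMap.smul_apply, actMap_single, actMap_smul,
        actVec, dlt, smul_smul]; congr 1; linear_combination a*c*b^(i+1)*(h3 i)
    · simp only [Module.End.mul_apply, LinearMap.smul_apply, actMap_single, actMap_smul,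
        actVec, dlt, smul_smul]; congr 1; linear_combination a*c^3*b^(j+3)*(h3 j)
    · simp only [Module.End.mul_apply, LinearMap.smul_apply, actMap_single, actMap_smul,
        actVec, dlt, smul_smul]; congr 1; linear_combination a*c^2*b^(l+1)*(h3 (l+1))
  | r5 =>
    simp only [map_sub, map_mul, map_smul, map_zero, rep_Xg]
    rw [sub_eq_zero]
    refine Finsupp.lhom_ext fun i a => ?_
    rcases i with i | j | l <;>
      · simp only [Module.End.mul_apply, LinearMap.smul_apply, actMap_single, actMap_smul,
          actVec, dlt, smul_smul]; congr 1; ring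
  | r6 =>
    simp only [map_sub, map_mul, map_smul, map_zero, rep_Xg]
    rw [sub_eq_zero]
    refine Finsupp.lhom_ext fun i a => ?_
    rcases i with i | j | l <;>
      · simp only [Module.End.mul_apply, LinearMap.smul_apply, actMap_single, actMap_smul,
          actVec, dlt, smul_smul]; congr 1; ring

end RelCheck

section Quot
variable {k : Type*} [CommRing k] (b c : k)

lemma qrel {u v : FreeAlg k} (h : KDRel k b c u v) : kdQuot k b c u = kdQuot k b c v :=
  RingQuot.mkAlgHom_rel k h

lemma qr1 : kdQuot k b c (Xg k 2) * kdQuot k b c (Xg k 2)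
    = c • (kdQuot k b c (Xg k 0) * kdQuot k b c (Xg k 1)) := by
  have := qrel b c (KDRel.r1 (k := k))
  simpa [map_sub, map_mul, map_smul, sub_eq_zero] using this

lemma qr2 : kdQuot k b c (Xg k 1) * kdQuot k b c (Xg k 2)
    = (c^2) • (kdQuot k b c (Xg k 0) * kdQuot k b c (Xg k 0)) := by
  have := qrel b c (KDRel.r2 (k := k))
  simpa [map_sub, map_mul, map_smul, sub_eq_zero] using this

lemma qr3 : kdQuot k b c (Xg k 2) * kdQuot k b c (Xg k 1)
    = (b^2) • (kdQuot k b c (Xg k 1) * kdQuot k b c (Xg k 2)) := by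
  have := qrel b c (KDRel.r3 (k := k))
  simpa [map_sub, map_mul, map_smul, sub_eq_zero] using this

lemma qr4 : kdQuot k b c (Xg k 1) * kdQuot k b c (Xg k 1)
    = (b*c) • (kdQuot k b c (Xg k 0) * kdQuot k b c (Xg k 2)) := by
  have := qrel b c (KDRel.r4 (k := k))
  simpa [map_sub, map_mul, map_smul, sub_eq_zero] using this

lemma qr5 : kdQuot k b c (Xg k 2) * kdQuot k b c (Xg k 0)
    = b • (kdQuot k b c (Xg k 0) * kdQuot k b c (Xg k 2)) := by
  have := qrel b c (KDRel.r5 (k := k))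
  simpa [map_sub, map_mul, map_smul, sub_eq_zero] using this

lemma qr6 : kdQuot k b c (Xg k 1) * kdQuot k b c (Xg k 0)
    = (b^2) • (kdQuot k b c (Xg k 0) * kdQuot k b c (Xg k 1)) := by
  have := qrel b c (KDRel.r6 (k := k))
  simpa [map_sub, map_mul, map_smul, sub_eq_zero] using this

lemma qYX (n : ℕ) : kdQuot k b c (Xg k 1) * kdQuot k b c (Xg k 0) ^ n
    = (b^(2*n)) • (kdQuot k b c (Xg k 0) ^ n * kdQuot k b c (Xg k 1)) := by
  induction n with
  | zero => simp
  | succ n ih =>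
    rw [pow_succ, ← mul_assoc, ih, smul_mul_assoc, mul_assoc, qr6, mul_smul_comm, smul_smul,
      ← mul_assoc, ← pow_succ]
    congr 1 <;> ring_nf

lemma qZX (n : ℕ) : kdQuot k b c (Xg k 2) * kdQuot k b c (Xg k 0) ^ n
    = (b^n) • (kdQuot k b c (Xg k 0) ^ n * kdQuot k b c (Xg k 2)) := by
  induction n with
  | zero => simp
  | succ n ih =>
    rw [pow_succ, ← mul_assoc, ih, smul_mul_assoc, mul_assoc, qr5, mul_smul_comm, smul_smul,
      ← mul_assoc, ← pow_succ]

end Quot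


section Span
variable {k : Type*} [CommRing k] (b c : k)

def bvec : Idx → KoszulDual k b c
  | Sum.inl i => kdQuot k b c (Xg k 0) ^ i
  | Sum.inr (Sum.inl j) => kdQuot k b c (Xg k 0) ^ j * kdQuot k b c (Xg k 1)
  | Sum.inr (Sum.inr l) => kdQuot k b c (Xg k 0) ^ l * kdQuot k b c (Xg k 2)

lemma xshift (j j' : ℕ) (w : KoszulDual k b c) :
    kdQuot k b c (Xg k 0) ^ j * (kdQuot k b c (Xg k 0) ^ j' * (kdQuot k b c (Xg k 0) * w))
      = kdQuot k b c (Xg k 0) ^ (j+j'+1) * w := by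
  rw [← mul_assoc, ← mul_assoc, ← pow_add, ← pow_succ]

lemma xshift2 (j j' : ℕ) :
    kdQuot k b c (Xg k 0) ^ j * (kdQuot k b c (Xg k 0) ^ j'
      * (kdQuot k b c (Xg k 0) * kdQuot k b c (Xg k 0)))
      = kdQuot k b c (Xg k 0) ^ (j+j'+2) := by
  rw [← mul_assoc, ← mul_assoc, ← pow_add, ← pow_succ, ← pow_succ]

lemma bvec_mul (m n : Idx) : ∃ (s : k) (t : Idx),
    bvec b c m * bvec b c n = s • bvec b c t := by
  rcases m with i | j | l <;> rcases n with i' | j' | l'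
  · exact ⟨1, Sum.inl (i + i'), by rw [one_smul, bvec, bvec, bvec, pow_add]⟩
  · exact ⟨1, Sum.inr (Sum.inl (i + j')), by
      rw [one_smul, bvec, bvec, bvec, ← mul_assoc, ← pow_add]⟩
  · exact ⟨1, Sum.inr (Sum.inr (i + l')), by
      rw [one_smul, bvec, bvec, bvec, ← mul_assoc, ← pow_add]⟩
  · refine ⟨b^(2*i'), Sum.inr (Sum.inl (j + i')), ?_⟩
    rw [bvec, bvec, bvec, mul_assoc, qYX, mul_smul_comm, ← mul_assoc, ← pow_add]
  · refine ⟨b^(2*j') * (b*c), Sum.inr (Sum.inr (j + j' + 1)), ?_⟩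
    rw [bvec, bvec, bvec, mul_assoc, ← mul_assoc _ _ (kdQuot k b c (Xg k 1)), qYX,
      smul_mul_assoc, mul_assoc, qr4]
    simp only [mul_smul_comm, smul_mul_assoc, smul_smul]
    rw [xshift]
  · refine ⟨b^(2*l') * c^2, Sum.inl (j + l' + 2), ?_⟩
    rw [bvec, bvec, bvec, mul_assoc, ← mul_assoc _ _ (kdQuot k b c (Xg k 2)), qYX,
      smul_mul_assoc, mul_assoc, qr2]
    simp only [mul_smul_comm, smul_mul_assoc, smul_smul]
    rw [xshift2]
  · refine ⟨b^i', Sum.inr (Sum.inr (l + i')), ?_⟩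
    rw [bvec, bvec, bvec, mul_assoc, qZX, mul_smul_comm, ← mul_assoc, ← pow_add]
  · refine ⟨b^j' * (b^2*c^2), Sum.inl (l + j' + 2), ?_⟩
    rw [bvec, bvec, bvec, mul_assoc, ← mul_assoc _ _ (kdQuot k b c (Xg k 1)), qZX,
      smul_mul_assoc, mul_assoc, qr3]
    simp only [mul_smul_comm, smul_mul_assoc, smul_smul]
    rw [qr2]
    simp only [mul_smul_comm, smul_mul_assoc, smul_smul]
    rw [xshift2]
    congr 1
    ring
  · refine ⟨b^l' * c, Sum.inr (Sum.inl (l + l' + 1)), ?_⟩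
    rw [bvec, bvec, bvec, mul_assoc, ← mul_assoc _ _ (kdQuot k b c (Xg k 2)), qZX,
      smul_mul_assoc, mul_assoc, qr1]
    simp only [mul_smul_comm, smul_mul_assoc, smul_smul]
    rw [xshift]

end Span

section Span2
variable {k : Type*} [CommRing k] (b c : k)

lemma bvec_span : ⊤ ≤ Submodule.span k (Set.range (bvec b c)) := by
  set S := Submodule.span k (Set.range (bvec b c)) with hS
  have hmul : ∀ u ∈ S, ∀ w ∈ S, u * w ∈ S := by
    have h2 : S * S ≤ S := by
      rw [hS, Submodule.span_mul_span]
      refine Submodule.span_le.2 ?_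
      rintro _ ⟨_, ⟨m, rfl⟩, _, ⟨n, rfl⟩, rfl⟩
      obtain ⟨s, t, h⟩ := bvec_mul b c m n
      show bvec b c m * bvec b c n ∈ _
      rw [h]
      exact Submodule.smul_mem _ _ (Submodule.subset_span ⟨t, rfl⟩)
    exact fun u hu w hw => h2 (Submodule.mul_mem_mul hu hw)
  intro a _
  obtain ⟨p, rfl⟩ := RingQuot.mkAlgHom_surjective k (KDRel k b c) a
  induction p using FreeAlgebra.induction with
  | grade0 r =>
    rw [AlgHom.commutes, Algebra.algebraMap_eq_smul_one]
    exact Submodule.smul_mem _ _ (Submodule.subset_span ⟨Sum.inl 0, by simp [bvec]⟩)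
  | grade1 g =>
    fin_cases g
    · exact Submodule.subset_span ⟨Sum.inl 1, by simp [bvec, kdQuot, Xg]⟩
    · exact Submodule.subset_span ⟨Sum.inr (Sum.inl 0), by simp [bvec, kdQuot, Xg]⟩
    · exact Submodule.subset_span ⟨Sum.inr (Sum.inr 0), by simp [bvec, kdQuot, Xg]⟩
  | mul a b iha ihb =>
    rw [map_mul]
    exact hmul _ (iha Submodule.mem_top) _ (ihb Submodule.mem_top)
  | add a b iha ihb =>
    rw [map_add]
    exact Submodule.add_mem _ (iha Submodule.mem_top) (ihb Submodule.mem_top)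

end Span2

section Eval
variable {k : Type*} [CommRing k] (b c : k)

def shiftn (n : ℕ) : Idx → Idx
  | Sum.inl i => Sum.inl (i + n)
  | Sum.inr (Sum.inl j) => Sum.inr (Sum.inl (j + n))
  | Sum.inr (Sum.inr l) => Sum.inr (Sum.inr (l + n))

lemma actMap0_dlt (m : Idx) : actMap b c 0 (dlt k m) = dlt k (shiftn 1 m) := by
  rcases m with i | j | l <;> simp [dlt, actVec, shiftn]

lemma pow0_dlt (n : ℕ) (m : Idx) :
    (actMap b c 0 ^ n) (dlt k m) = dlt k (shiftn n m) := by
  induction n generalizing m with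
  | zero => rcases m with i | j | l <;> simp [shiftn]
  | succ n ih =>
    rw [pow_succ, Module.End.mul_apply, actMap0_dlt, ih]
    rcases m with i | j | l
    · simp only [shiftn]
      congr 2
      omega
    · simp only [shiftn]
      congr 3
      omega
    · simp only [shiftn]
      congr 3
      omega

variable (hb : b ^ 3 = 1) (hc : c ^ 3 = 1)

def repQ : KoszulDual k b c →ₐ[k] Module.End k (Mdl k) :=
  RingQuot.liftAlgHom k ⟨rep b c, fun _ _ h => rep_rel b c hb hc h⟩

lemma repQ_kdQuot (w : FreeAlg k) :
    repQ b c hb hc (kdQuot k b c w) = rep b c w :=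
  RingQuot.liftAlgHom_mkAlgHom_apply k (rep b c) (fun _ _ h => rep_rel b c hb hc h) w

lemma eval_bvec (m : Idx) :
    (repQ b c hb hc (bvec b c m)) (dlt k (Sum.inl 0)) = dlt k m := by
  rcases m with i | j | l
  · rw [bvec, map_pow, repQ_kdQuot, rep_Xg, pow0_dlt]
    simp [shiftn]
  · rw [bvec, map_mul, map_pow, repQ_kdQuot, repQ_kdQuot, rep_Xg, rep_Xg,
      Module.End.mul_apply]
    have h1 : actMap b c 1 (dlt k (Sum.inl 0)) = dlt k (Sum.inr (Sum.inl 0)) := by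
      simp [dlt, actVec]
    rw [h1, pow0_dlt]
    simp [shiftn]
  · rw [bvec, map_mul, map_pow, repQ_kdQuot, repQ_kdQuot, rep_Xg, rep_Xg,
      Module.End.mul_apply]
    have h1 : actMap b c 2 (dlt k (Sum.inl 0)) = dlt k (Sum.inr (Sum.inr 0)) := by
      simp [dlt, actVec]
    rw [h1, pow0_dlt]
    simp [shiftn]

end Eval

theorem koszul_dual_infinite_dimensional
    (k : Type*) [Field k] [IsAlgClosed k] [CharZero k]
    (b c : k) (hb : b ^ 3 = 1) (hc : c ^ 3 = 1) :
    ¬ Module.Finite k (KoszulDual k b c) ∧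
    ∃ B : Module.Basis (ℕ ⊕ ℕ ⊕ ℕ) k (KoszulDual k b c),
      (∀ i : ℕ, B (Sum.inl i) = kdQuot k b c (Xg k 0) ^ i) ∧
      (∀ j : ℕ, B (Sum.inr (Sum.inl j)) = kdQuot k b c (Xg k 0) ^ j * kdQuot k b c (Xg k 1)) ∧
      (∀ l : ℕ, B (Sum.inr (Sum.inr l)) = kdQuot k b c (Xg k 0) ^ l * kdQuot k b c (Xg k 2)) := by
  have hψ : ∀ m : Idx, ((LinearMap.applyₗ (dlt k (Sum.inl 0))).comp
      (repQ b c hb hc).toLinearMap) (bvec b c m) = Finsupp.single m (1 : k) := by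
    intro m
    simpa [dlt] using eval_bvec b c hb hc m
  have li : LinearIndependent k (bvec b c) := by
    apply LinearIndependent.of_comp ((LinearMap.applyₗ (dlt k (Sum.inl 0))).comp
      (repQ b c hb hc).toLinearMap)
    have heq : (⇑((LinearMap.applyₗ (dlt k (Sum.inl 0))).comp
        (repQ b c hb hc).toLinearMap) ∘ bvec b c) = fun m => Finsupp.single m (1 : k) :=
      funext fun m => hψ m
    rw [heq]
    have := (Finsupp.basisSingleOne (R := k) (ι := Idx)).linearIndependent
    rwa [Finsupp.coe_basisSingleOne] at this
  let B : Module.Basis Idx k (KoszulDual k b c) := Module.Basis.mk li (bvec_span b c)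
  refine ⟨fun hfin => ?_, B, fun i => ?_, fun j => ?_, fun l => ?_⟩
  · haveI := hfin
    haveI : Finite Idx := Module.Finite.finite_basis B
    exact not_finite Idx
  · rw [show B (Sum.inl i) = bvec b c (Sum.inl i) from Module.Basis.mk_apply li _ _]; rfl
  · rw [show B (Sum.inr (Sum.inl j)) = bvec b c (Sum.inr (Sum.inl j)) from
      Module.Basis.mk_apply li _ _]; rfl
  · rw [show B (Sum.inr (Sum.inr l)) = bvec b c (Sum.inr (Sum.inr l)) from
      Module.Basis.mk_apply li _ _]; rfl

end
end

section
/- Let a, b, c ∈ k be arbitrary, let d ≥ 2, and let p₀, …, p_{d−1} ∈ k³ be nonzero vectors, p_i = (x_i, y_i, z_i), satisfying the multilinearized Sklyanin relations f_i = g_i = h_i = 0 for all 0 ≤ i ≤ d−2. Then every p_j lies on the cubic curve E_{a,b,c}: for every 0 ≤ j ≤ d−1 one has (a³ + b³ + c³)·x_j·y_j·z_j = a·b·c·(x_j³ + y_j³ + z_j³). -/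
/-!
STATEMENT 7: Let `a, b, c ∈ k` be arbitrary, `d ≥ 2`, and let `p₀, …, p_{d−1} ∈ k³` be
nonzero vectors `p_i = (x_i, y_i, z_i)` satisfying the multilinearized Sklyanin relations
`f_i = g_i = h_i = 0` for `0 ≤ i ≤ d−2`.  Then every `p_j` lies on the cubic
`E_{a,b,c} : (a³+b³+c³)·x·y·z = a·b·c·(x³+y³+z³)`.
-/

/-- Key algebraic lemma: if `(x1,y1,z1)` is a nonzero solution of the linear system
whose matrix is built from `(x0,y0,z0)`, then the determinant, which is exactly the
cubic evaluated at `(x0,y0,z0)`, vanishes. -/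
lemma sklyanin_det_aux {k : Type*} [Field k]
    (a b c x0 y0 z0 x1 y1 z1 : k)
    (hf : a * (y1 * z0) + b * (z1 * y0) + c * (x1 * x0) = 0)
    (hg : a * (z1 * x0) + b * (x1 * z0) + c * (y1 * y0) = 0)
    (hh : a * (x1 * y0) + b * (y1 * x0) + c * (z1 * z0) = 0)
    (hnz : x1 ≠ 0 ∨ y1 ≠ 0 ∨ z1 ≠ 0) :
    (a ^ 3 + b ^ 3 + c ^ 3) * (x0 * y0 * z0)
      = a * b * c * (x0 ^ 3 + y0 ^ 3 + z0 ^ 3) := by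
  set D : k := (a ^ 3 + b ^ 3 + c ^ 3) * (x0 * y0 * z0)
      - a * b * c * (x0 ^ 3 + y0 ^ 3 + z0 ^ 3) with hD
  have hx : D * x1 = 0 := by
    rw [hD]
    linear_combination (c ^ 2 * y0 * z0 - a * b * x0 ^ 2) * hf
      + (b ^ 2 * x0 * y0 - a * c * z0 ^ 2) * hg
      + (a ^ 2 * x0 * z0 - b * c * y0 ^ 2) * hh
  have hy : D * y1 = 0 := by
    rw [hD]
    linear_combination (a ^ 2 * x0 * y0 - b * c * z0 ^ 2) * hf
      + (c ^ 2 * x0 * z0 - a * b * y0 ^ 2) * hg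
      + (b ^ 2 * y0 * z0 - a * c * x0 ^ 2) * hh
  have hz : D * z1 = 0 := by
    rw [hD]
    linear_combination (b ^ 2 * x0 * z0 - a * c * y0 ^ 2) * hf
      + (a ^ 2 * y0 * z0 - b * c * x0 ^ 2) * hg
      + (c ^ 2 * x0 * y0 - a * b * z0 ^ 2) * hh
  have hD0 : D = 0 := by
    rcases hnz with h | h | h
    · exact (mul_eq_zero.mp hx).resolve_right h
    · exact (mul_eq_zero.mp hy).resolve_right h
    · exact (mul_eq_zero.mp hz).resolve_right h
  rw [hD] at hD0
  linear_combination hD0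

theorem truncated_point_scheme_lies_on_cubic
    (k : Type*) [Field k] [IsAlgClosed k] [CharZero k]
    (a b c : k) (d : ℕ) (hd : 2 ≤ d)
    (p : Fin d → Fin 3 → k)
    (hnz : ∀ i : Fin d, p i ≠ 0)
    (hrel : ∀ (i : ℕ) (hi : i + 1 < d),
      a * (p ⟨i + 1, hi⟩ 1 * p ⟨i, by omega⟩ 2)
          + b * (p ⟨i + 1, hi⟩ 2 * p ⟨i, by omega⟩ 1)
          + c * (p ⟨i + 1, hi⟩ 0 * p ⟨i, by omega⟩ 0) = 0 ∧
      a * (p ⟨i + 1, hi⟩ 2 * p ⟨i, by omega⟩ 0)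
          + b * (p ⟨i + 1, hi⟩ 0 * p ⟨i, by omega⟩ 2)
          + c * (p ⟨i + 1, hi⟩ 1 * p ⟨i, by omega⟩ 1) = 0 ∧
      a * (p ⟨i + 1, hi⟩ 0 * p ⟨i, by omega⟩ 1)
          + b * (p ⟨i + 1, hi⟩ 1 * p ⟨i, by omega⟩ 0)
          + c * (p ⟨i + 1, hi⟩ 2 * p ⟨i, by omega⟩ 2) = 0) :
    ∀ j : Fin d,
      (a ^ 3 + b ^ 3 + c ^ 3) * (p j 0 * p j 1 * p j 2)
        = a * b * c * (p j 0 ^ 3 + p j 1 ^ 3 + p j 2 ^ 3) := by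
  have nonzero : ∀ i : Fin d, p i 0 ≠ 0 ∨ p i 1 ≠ 0 ∨ p i 2 ≠ 0 := by
    intro i
    by_contra h
    push_neg at h
    obtain ⟨h0, h1, h2⟩ := h
    apply hnz i
    funext m
    fin_cases m <;> assumption
  intro j
  by_cases hj : (j : ℕ) + 1 < d
  · -- use relation at i = j; p j is the "0"-vector, p (j+1) the nonzero kernel vector
    obtain ⟨hf, hg, hh⟩ := hrel j hj
    simp only [Fin.eta] at hf hg hh
    exact sklyanin_det_aux a b c _ _ _ _ _ _ hf hg hh (nonzero ⟨(j : ℕ) + 1, hj⟩)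
  · -- j = d - 1; use relation at i = d - 2, with roles (and a, b) swapped
    have hi : d - 2 + 1 < d := by omega
    have hj' : j = ⟨d - 2 + 1, hi⟩ := by
      apply Fin.ext
      simp
      omega
    obtain ⟨hf, hg, hh⟩ := hrel (d - 2) hi
    rw [hj']
    have key := sklyanin_det_aux b a c
      (p ⟨d - 2 + 1, hi⟩ 0) (p ⟨d - 2 + 1, hi⟩ 1) (p ⟨d - 2 + 1, hi⟩ 2)
      (p ⟨d - 2, by omega⟩ 0) (p ⟨d - 2, by omega⟩ 1) (p ⟨d - 2, by omega⟩ 2)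
      (by linear_combination hf) (by linear_combination hg) (by linear_combination hh)
      (nonzero ⟨d - 2, by omega⟩)
    linear_combination key
end

section
/- Consider the multilinearized relations of S(1,1,1) (a = b = c = 1). Let ω ∈ k with ω³ = 1, let p₀ = λ·e_ω for some λ ≠ 0, and let p₁ = (x₁,y₁,z₁) ∈ k³ be nonzero. Then the equations y₁z₀ + z₁y₀ + x₁x₀ = 0, z₁x₀ + x₁z₀ + y₁y₀ = 0, x₁y₀ + y₁x₀ + z₁z₀ = 0 hold if and only if p₁ ∈ L_ω, i.e. x₁ + ω²·y₁ + ω·z₁ = 0. In particular, for every [y₁ : z₁] ∈ ℙ¹ there is exactly one x₁ making (x₁,y₁,z₁) a solution, so the solutions form a ℙ¹. -/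
/-!
STATEMENT 8: Multilinearized relations of `S(1,1,1)`.  Let `ω³ = 1`, `p₀ = λ·e_ω`
(`λ ≠ 0`, `e_ω = (1, ω, ω²)`) and `p₁ = (x₁,y₁,z₁) ≠ 0`.  Then
`f₀ = g₀ = h₀ = 0` holds iff `p₁ ∈ L_ω`, i.e. `x₁ + ω²·y₁ + ω·z₁ = 0`.  In particular,
for every `[y₁:z₁] ∈ ℙ¹` there is exactly one `x₁` making `(x₁,y₁,z₁)` a solution.
-/

theorem relations_at_point_of_Z1
    (k : Type*) [Field k] [IsAlgClosed k] [CharZero k]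
    (ω l x₁ y₁ z₁ : k) (hω : ω ^ 3 = 1) (hl : l ≠ 0)
    (hp₁ : ¬(x₁ = 0 ∧ y₁ = 0 ∧ z₁ = 0)) :
    ((y₁ * (l * ω ^ 2) + z₁ * (l * ω) + x₁ * l = 0 ∧
      z₁ * l + x₁ * (l * ω ^ 2) + y₁ * (l * ω) = 0 ∧
      x₁ * (l * ω) + y₁ * l + z₁ * (l * ω ^ 2) = 0)
        ↔ x₁ + ω ^ 2 * y₁ + ω * z₁ = 0) ∧
    (∀ Y Z : k, ¬(Y = 0 ∧ Z = 0) →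
      ∃! X : k,
        Y * (l * ω ^ 2) + Z * (l * ω) + X * l = 0 ∧
        Z * l + X * (l * ω ^ 2) + Y * (l * ω) = 0 ∧
        X * (l * ω) + Y * l + Z * (l * ω ^ 2) = 0) := by
  constructor
  · constructor
    · rintro ⟨h1, -, -⟩
      have h : l * (x₁ + ω ^ 2 * y₁ + ω * z₁) = 0 := by linear_combination h1
      rcases mul_eq_zero.mp h with h' | h'
      · exact absurd h' hl
      · exact h'
    · intro h
      refine ⟨by linear_combination l * h, ?_, ?_⟩
      · linear_combination l * ω ^ 2 * h - (l * ω * y₁ + l * z₁) * hω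
      · linear_combination l * ω * h - l * y₁ * hω
  · intro Y Z _
    refine ⟨-(ω ^ 2 * Y + ω * Z), ⟨by ring, ?_, ?_⟩, ?_⟩
    · linear_combination -(l * ω * Y + l * Z) * hω
    · linear_combination -l * Y * hω
    · rintro X' ⟨h1, -, -⟩
      have h : l * (X' + ω ^ 2 * Y + ω * Z) = 0 := by linear_combination h1
      rcases mul_eq_zero.mp h with h' | h'
      · exact absurd h' hl
      · linear_combination h'
end

section
/- Consider the multilinearized relations of S(1,1,1). Let p₀ = (x₀,y₀,z₀) ∈ k³ be nonzero with x₀³ + y₀³ + z₀³ = 3·x₀·y₀·z₀ (so p₀ lies on the cubic E), and suppose p₀ is not a scalar multiple of e_ω for any ω with ω³ = 1 (i.e. p₀ ∉ Z₁). Then there exists a unique ω ∈ k with ω³ = 1 such that, for every nonzero p₁ ∈ k³, the equations f₀ = g₀ = h₀ = 0 hold if and only if p₁ is a nonzero scalar multiple of e_ω; moreover for this ω one has p₀ ∈ L_ω. In particular the solution p₁ exists, is unique up to scalar, and lies in Z₁. -/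
/-- If `p₀` lies on two distinct lines `L_ω` and `L_{ηω}` (with `η` a primitive cube
root of unity), then `p₀` is a scalar multiple of some `e_ν`. -/
lemma two_lines_aux {k : Type*} [Field k] [CharZero k] (x₀ y₀ z₀ ω η : k)
    (hω3 : ω ^ 3 = 1) (hη : η ^ 2 + η + 1 = 0)
    (h1 : x₀ + ω ^ 2 * y₀ + ω * z₀ = 0)
    (h2 : x₀ + (η * ω) ^ 2 * y₀ + (η * ω) * z₀ = 0) :
    ∃ ν μ : k, ν ^ 3 = 1 ∧ x₀ = μ ∧ y₀ = μ * ν ∧ z₀ = μ * ν ^ 2 := by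
  have hη3 : η ^ 3 = 1 := by linear_combination (η - 1) * hη
  have hω0 : ω ≠ 0 := by
    intro h; rw [h] at hω3; norm_num at hω3
  have hη1 : (1 : k) - η ≠ 0 := by
    intro h
    rw [← sub_eq_zero.mp h] at hη; norm_num at hη
  have hsub2 : ω * (1 - η) * (ω * (1 + η) * y₀ + z₀) = 0 := by
    linear_combination h1 - h2
  have hsum : ω * (1 + η) * y₀ + z₀ = 0 := by
    rcases mul_eq_zero.mp hsub2 with h | h
    · exact absurd h (mul_ne_zero hω0 hη1)
    · exact h
  have hz : z₀ = ω * η ^ 2 * y₀ := by linear_combination hsum - ω * y₀ * hη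
  have hx : x₀ = ω ^ 2 * η * y₀ := by
    linear_combination h1 - ω * hz - ω ^ 2 * y₀ * hη
  have hy : y₀ = x₀ * (ω * η ^ 2) := by
    linear_combination -ω * η ^ 2 * hx - y₀ * η ^ 3 * hω3 - y₀ * hη3
  have hz2 : z₀ = x₀ * (ω * η ^ 2) ^ 2 := by
    linear_combination hz + ω * η ^ 2 * hy
  have hν3 : (ω * η ^ 2) ^ 3 = 1 := by
    linear_combination η ^ 6 * hω3 + (η ^ 3 + 1) * hη3
  exact ⟨ω * η ^ 2, x₀, hν3, rfl, hy, hz2⟩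

theorem unique_continuation_off_Z1
    (k : Type*) [Field k] [IsAlgClosed k] [CharZero k]
    (x₀ y₀ z₀ : k)
    (hnz : ¬(x₀ = 0 ∧ y₀ = 0 ∧ z₀ = 0))
    (hE : x₀ ^ 3 + y₀ ^ 3 + z₀ ^ 3 = 3 * (x₀ * y₀ * z₀))
    (hnotZ : ¬ ∃ ω μ : k, ω ^ 3 = 1 ∧ x₀ = μ ∧ y₀ = μ * ω ∧ z₀ = μ * ω ^ 2) :
    ∃! ω : k, ω ^ 3 = 1 ∧
      (∀ x₁ y₁ z₁ : k, ¬(x₁ = 0 ∧ y₁ = 0 ∧ z₁ = 0) →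
        ((y₁ * z₀ + z₁ * y₀ + x₁ * x₀ = 0 ∧
          z₁ * x₀ + x₁ * z₀ + y₁ * y₀ = 0 ∧
          x₁ * y₀ + y₁ * x₀ + z₁ * z₀ = 0)
            ↔ ∃ μ : k, μ ≠ 0 ∧ x₁ = μ ∧ y₁ = μ * ω ∧ z₁ = μ * ω ^ 2)) ∧
      x₀ + ω ^ 2 * y₀ + ω * z₀ = 0 := by
  -- obtain a primitive cube root of unity ζ
  obtain ⟨s, hs⟩ := IsAlgClosed.exists_pow_nat_eq (-3 : k) (n := 2) (by norm_num)
  set ζ : k := (-1 + s) / 2 with hζdef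
  have hζ : ζ ^ 2 + ζ + 1 = 0 := by
    rw [hζdef]; field_simp; linear_combination hs
  have hζ3 : ζ ^ 3 = 1 := by linear_combination (ζ - 1) * hζ
  have hζ0 : ζ ≠ 0 := by intro h; rw [h] at hζ; norm_num at hζ
  have hζ1 : ζ ≠ 1 := by intro h; rw [h] at hζ; norm_num at hζ
  have hζ2 : (ζ ^ 2) ^ 2 + ζ ^ 2 + 1 = 0 := by
    linear_combination (ζ ^ 2 - ζ + 1) * hζ
  -- factor the cubic and find the line through p₀
  have hq : (x₀ + ζ ^ 2 * y₀ + ζ * z₀) * (x₀ + ζ * y₀ + ζ ^ 2 * z₀)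
      = x₀ ^ 2 + y₀ ^ 2 + z₀ ^ 2 - x₀ * y₀ - y₀ * z₀ - x₀ * z₀ := by
    linear_combination (x₀ * y₀ + x₀ * z₀ + (ζ - 1) * (y₀ ^ 2 + z₀ ^ 2)
      + (ζ ^ 2 - ζ + 1) * y₀ * z₀) * hζ
  have key : (x₀ + y₀ + z₀) * ((x₀ + ζ ^ 2 * y₀ + ζ * z₀) * (x₀ + ζ * y₀ + ζ ^ 2 * z₀)) = 0 := by
    rw [hq]; linear_combination hE
  obtain ⟨ω₀, hω03, hL⟩ : ∃ ω : k, ω ^ 3 = 1 ∧ x₀ + ω ^ 2 * y₀ + ω * z₀ = 0 := by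
    rcases mul_eq_zero.mp key with h | h
    · exact ⟨1, by norm_num, by linear_combination h⟩
    · rcases mul_eq_zero.mp h with h' | h'
      · exact ⟨ζ, hζ3, h'⟩
      · exact ⟨ζ ^ 2, by linear_combination (ζ ^ 3 + 1) * hζ3,
          by linear_combination h' + ζ * y₀ * hζ3⟩
  have hω00 : ω₀ ≠ 0 := by intro h; rw [h] at hω03; norm_num at hω03
  -- p₀ lies on no other line
  have honly : ∀ η : k, η ^ 2 + η + 1 = 0 →
      x₀ + (η * ω₀) ^ 2 * y₀ + (η * ω₀) * z₀ ≠ 0 := by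
    intro η hη h
    exact hnotZ (two_lines_aux x₀ y₀ z₀ ω₀ η hω03 hη hL h)
  have hA : x₀ + (ζ * ω₀) ^ 2 * y₀ + (ζ * ω₀) * z₀ ≠ 0 := honly ζ hζ
  have hB : x₀ + (ζ ^ 2 * ω₀) ^ 2 * y₀ + (ζ ^ 2 * ω₀) * z₀ ≠ 0 := honly (ζ ^ 2) hζ2
  have hAω3 : (ζ * ω₀) ^ 3 = 1 := by linear_combination ω₀ ^ 3 * hζ3 + hω03
  have hBω3 : (ζ ^ 2 * ω₀) ^ 3 = 1 := by
    linear_combination ω₀ ^ 3 * (ζ ^ 3 + 1) * hζ3 + hω03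
  refine ⟨ω₀, ⟨hω03, ?_, hL⟩, ?_⟩
  · -- the iff for all nonzero p₁
    intro x₁ y₁ z₁ hp1
    constructor
    · rintro ⟨hf, hg, hh⟩
      have hA' : (x₀ + (ζ * ω₀) ^ 2 * y₀ + (ζ * ω₀) * z₀)
          * (x₁ + (ζ * ω₀) ^ 2 * y₁ + (ζ * ω₀) * z₁) = 0 := by
        linear_combination hf + (ζ * ω₀) * hg + (ζ * ω₀) ^ 2 * hh
          + ((ζ * ω₀) * y₀ * y₁ + z₀ * y₁ + y₀ * z₁) * hAω3
      have hB' : (x₀ + (ζ ^ 2 * ω₀) ^ 2 * y₀ + (ζ ^ 2 * ω₀) * z₀)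
          * (x₁ + (ζ ^ 2 * ω₀) ^ 2 * y₁ + (ζ ^ 2 * ω₀) * z₁) = 0 := by
        linear_combination hf + (ζ ^ 2 * ω₀) * hg + (ζ ^ 2 * ω₀) ^ 2 * hh
          + ((ζ ^ 2 * ω₀) * y₀ * y₁ + z₀ * y₁ + y₀ * z₁) * hBω3
      have eqA : x₁ + (ζ * ω₀) ^ 2 * y₁ + (ζ * ω₀) * z₁ = 0 :=
        (mul_eq_zero.mp hA').resolve_left hA
      have eqB : x₁ + (ζ ^ 2 * ω₀) ^ 2 * y₁ + (ζ ^ 2 * ω₀) * z₁ = 0 :=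
        (mul_eq_zero.mp hB').resolve_left hB
      have hd : ω₀ * (ζ ^ 2 - ζ) * (ω₀ * y₁ - z₁) = 0 := by
        linear_combination eqA - eqB + ζ * ω₀ ^ 2 * y₁ * hζ3
      have hζζ : ζ ^ 2 - ζ ≠ 0 := by
        intro h
        have : ζ * (ζ - 1) = 0 := by linear_combination h
        rcases mul_eq_zero.mp this with h' | h'
        · exact hζ0 h'
        · exact hζ1 (sub_eq_zero.mp h')
      have hz1 : z₁ = ω₀ * y₁ := by
        rcases mul_eq_zero.mp hd with h | h
        · exact absurd h (mul_ne_zero hω00 hζζ)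
        · linear_combination -h
      have h2x : (2 : k) * (x₁ - ω₀ ^ 2 * y₁) = 0 := by
        linear_combination eqA + eqB - ζ * ω₀ ^ 2 * y₁ * hζ3 - ω₀ ^ 2 * y₁ * hζ
          - ω₀ * z₁ * hζ + ω₀ * hz1
      have hx1 : x₁ = ω₀ ^ 2 * y₁ := by
        have := (mul_eq_zero.mp h2x).resolve_left (by norm_num)
        linear_combination this
      have hy1 : y₁ = ω₀ * x₁ := by
        linear_combination -y₁ * hω03 - ω₀ * hx1
      have hz1' : z₁ = x₁ * ω₀ ^ 2 := by
        linear_combination hz1 + ω₀ * hy1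
      have hx10 : x₁ ≠ 0 := by
        intro h
        exact hp1 ⟨h, by rw [hy1, h, mul_zero], by rw [hz1', h, zero_mul]⟩
      exact ⟨x₁, hx10, rfl, by linear_combination hy1, by linear_combination hz1'⟩
    · rintro ⟨μ, hμ, hx1, hy1, hz1⟩
      subst hx1; subst hy1; subst hz1
      refine ⟨?_, ?_, ?_⟩
      · linear_combination x₁ * hL
      · linear_combination x₁ * ω₀ ^ 2 * hL - x₁ * (ω₀ * y₀ + z₀) * hω03
      · linear_combination x₁ * ω₀ * hL - x₁ * y₀ * hω03
  · -- uniqueness of ω₀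
    rintro ω' ⟨hω'3, _, hL'⟩
    by_contra hne
    set η : k := ω' * ω₀ ^ 2 with hηdef
    have hη3 : η ^ 3 = 1 := by
      rw [hηdef]; linear_combination ω₀ ^ 6 * hω'3 + (ω₀ ^ 3 + 1) * hω03
    have hη1 : η ≠ 1 := by
      intro h
      apply hne
      have h1 : ω' * ω₀ ^ 2 = 1 := by rw [← hηdef, h]
      linear_combination ω₀ * h1 - ω' * hω03
    have hηq : η ^ 2 + η + 1 = 0 := by
      have hfac : (η - 1) * (η ^ 2 + η + 1) = 0 := by linear_combination hη3
      rcases mul_eq_zero.mp hfac with h | h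
      · exact absurd (sub_eq_zero.mp h) hη1
      · exact h
    apply honly η hηq
    rw [hηdef]
    linear_combination hL' + ω' ^ 2 * (ω₀ ^ 3 + 1) * y₀ * hω03 + ω' * z₀ * hω03
end

section
/- Consider the multilinearized relations of S(1,1,1). Let p₀, p₁ ∈ k³ both be nonzero. Then f₀ = g₀ = h₀ = 0 holds if and only if there exists ω ∈ k with ω³ = 1 such that either (p₀ ∈ L_ω and p₁ is a nonzero scalar multiple of e_ω) or (p₀ is a nonzero scalar multiple of e_ω and p₁ ∈ L_ω). Thus the truncated point scheme V₂ of S(1,1,1) is the union of six components, each isomorphic to ℙ¹ (a line crossed with a point of Z₁, or a point of Z₁ crossed with a line). -/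
/-!
STATEMENT 10: Multilinearized relations of `S(1,1,1)`.  For nonzero `p₀, p₁ ∈ k³`,
`f₀ = g₀ = h₀ = 0` holds iff there exists `ω` with `ω³ = 1` such that either
(`p₀ ∈ L_ω` and `p₁` is a nonzero scalar multiple of `e_ω`) or (`p₀` is a nonzero scalar
multiple of `e_ω` and `p₁ ∈ L_ω`).  Thus `V₂` is a union of six copies of `ℙ¹`.
-/

private lemma V2_aux
    (k : Type*) [Field k] [CharZero k]
    (α x₀ y₀ z₀ x₁ y₁ z₁ : k)
    (hα : α ^ 3 = 1)
    (hL : x₀ + α ^ 2 * y₀ + α * z₀ = 0)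
    (hp₀ : ¬(x₀ = 0 ∧ y₀ = 0 ∧ z₀ = 0))
    (hp₁ : ¬(x₁ = 0 ∧ y₁ = 0 ∧ z₁ = 0))
    (hf : y₁ * z₀ + z₁ * y₀ + x₁ * x₀ = 0)
    (hg : z₁ * x₀ + x₁ * z₀ + y₁ * y₀ = 0)
    (hh : x₁ * y₀ + y₁ * x₀ + z₁ * z₀ = 0) :
    ∃ ω : k, ω ^ 3 = 1 ∧
          ((x₀ + ω ^ 2 * y₀ + ω * z₀ = 0 ∧
              ∃ μ : k, μ ≠ 0 ∧ x₁ = μ ∧ y₁ = μ * ω ∧ z₁ = μ * ω ^ 2) ∨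
           ((∃ μ : k, μ ≠ 0 ∧ x₀ = μ ∧ y₀ = μ * ω ∧ z₀ = μ * ω ^ 2) ∧
              x₁ + ω ^ 2 * y₁ + ω * z₁ = 0)) := by
  have hα0 : α ≠ 0 := by
    intro h; rw [h] at hα; norm_num at hα
  have e1 : z₀ * (y₁ - α * x₁) + y₀ * (z₁ - α ^ 2 * x₁) = 0 := by
    linear_combination hf - x₁ * hL
  have e2 : z₀ * (x₁ - α * z₁) + y₀ * (y₁ - α ^ 2 * z₁) = 0 := by
    linear_combination hg - z₁ * hL
  have e3 : z₀ * (z₁ - α * y₁) + y₀ * (x₁ - α ^ 2 * y₁) = 0 := by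
    linear_combination hh - y₁ * hL
  have hyz : y₀ ≠ 0 ∨ z₀ ≠ 0 := by
    by_contra hcon
    push_neg at hcon
    exact hp₀ ⟨by linear_combination hL - α ^ 2 * hcon.1 - α * hcon.2, hcon.1, hcon.2⟩
  have det_aux : ∀ p q r t : k, z₀ * p + y₀ * q = 0 → z₀ * r + y₀ * t = 0 →
      p * t - q * r = 0 := by
    intro p q r t h1 h2
    rcases hyz with hy | hz
    · have h3 : y₀ * (p * t - q * r) = 0 := by linear_combination p * h2 - r * h1
      exact (mul_eq_zero.mp h3).resolve_left hy
    · have h3 : z₀ * (p * t - q * r) = 0 := by linear_combination t * h1 - q * h2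
      exact (mul_eq_zero.mp h3).resolve_left hz
  have d12 := det_aux _ _ _ _ e1 e2
  have d13 := det_aux _ _ _ _ e1 e3
  have r1 : (y₁ - α * x₁) * (y₁ - α ^ 2 * z₁) + α * (z₁ - α ^ 2 * x₁) ^ 2 = 0 := by
    linear_combination d12 + (-x₁ * z₁ + α ^ 2 * x₁ ^ 2) * hα
  have r2 : -(α ^ 2 * (y₁ - α * x₁) ^ 2) + α * ((z₁ - α ^ 2 * x₁) * (y₁ - α ^ 2 * z₁)) = 0 := by
    linear_combination d13 + (-z₁ ^ 2 + x₁ * y₁ - α * x₁ ^ 2 + α ^ 2 * x₁ * z₁) * hα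
  by_cases hA : y₁ - α * x₁ = 0
  · -- p₁ is a multiple of e_α
    have hB2 : α * (z₁ - α ^ 2 * x₁) ^ 2 = 0 := by
      linear_combination r1 - (y₁ - α ^ 2 * z₁) * hA
    have hB : z₁ - α ^ 2 * x₁ = 0 := by
      have h4 := (mul_eq_zero.mp hB2).resolve_left hα0
      exact pow_eq_zero_iff (two_ne_zero) |>.mp h4
    have hx₁ : x₁ ≠ 0 := by
      intro h
      exact hp₁ ⟨h, by linear_combination hA + α * h, by linear_combination hB + α ^ 2 * h⟩
    exact ⟨α, hα, Or.inl ⟨hL, x₁, hx₁, rfl, by linear_combination hA, by linear_combination hB⟩⟩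
  · -- p₀ is a multiple of e_σ
    have hA3 : α ^ 2 * ((y₁ - α * x₁) ^ 3 + (z₁ - α ^ 2 * x₁) ^ 3) = 0 := by
      linear_combination α * (z₁ - α ^ 2 * x₁) * r1 - (y₁ - α * x₁) * r2
    have hAB3 : (y₁ - α * x₁) ^ 3 + (z₁ - α ^ 2 * x₁) ^ 3 = 0 :=
      (mul_eq_zero.mp hA3).resolve_left (pow_ne_zero 2 hα0)
    set σ : k := -(z₁ - α ^ 2 * x₁) / (y₁ - α * x₁) with hσdef
    have hσ3 : σ ^ 3 = 1 := by
      rw [hσdef]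
      field_simp
      linear_combination -hAB3
    have hBσ : z₁ - α ^ 2 * x₁ = -(σ * (y₁ - α * x₁)) := by
      rw [hσdef]
      field_simp
    have hσα : σ ≠ α := by
      intro hs
      rw [hs] at hBσ
      have hDA : (y₁ - α * x₁) * ((y₁ - α ^ 2 * z₁) + (y₁ - α * x₁)) = 0 := by
        linear_combination r1 - (y₁ - α * x₁) ^ 2 * hα -
          α * ((z₁ - α ^ 2 * x₁) - α * (y₁ - α * x₁)) * hBσ
      have hD : (y₁ - α ^ 2 * z₁) + (y₁ - α * x₁) = 0 :=
        (mul_eq_zero.mp hDA).resolve_left hA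
      have h3 : (3 : k) * (y₁ - α * x₁) = 0 := by
        linear_combination hD + α ^ 2 * hBσ + (-y₁ + 2 * α * x₁) * hα
      exact hA ((mul_eq_zero.mp h3).resolve_left (by norm_num))
    have hu0 : (α ^ 2 * σ - 1) * (α * σ ^ 2 + α ^ 2 * σ + 1) = 0 := by
      linear_combination (σ ^ 3 + α * σ ^ 2) * hα + hσ3
    have hun : α ^ 2 * σ - 1 ≠ 0 := by
      intro h
      exact hσα (by linear_combination α * h - σ * hα)
    have huu : α * σ ^ 2 + α ^ 2 * σ + 1 = 0 := (mul_eq_zero.mp hu0).resolve_left hun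
    have hs2 : σ ^ 2 + α * σ + α ^ 2 = 0 := by
      linear_combination α ^ 2 * huu - (σ ^ 2 + α * σ) * hα
    have hzs : (y₁ - α * x₁) * (z₀ - σ * y₀) = 0 := by
      linear_combination e1 - y₀ * hBσ
    have hzy : z₀ - σ * y₀ = 0 := (mul_eq_zero.mp hzs).resolve_left hA
    have hx : x₀ = σ ^ 2 * y₀ := by linear_combination hL - α * hzy - y₀ * hs2
    have hy : y₀ = x₀ * σ := by linear_combination -σ * hx - y₀ * hσ3
    have hz : z₀ = x₀ * σ ^ 2 := by linear_combination hzy + σ * hy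
    have hx0 : x₀ ≠ 0 := by
      intro h
      exact hp₀ ⟨h, by rw [hy, h, zero_mul], by rw [hz, h, zero_mul]⟩
    have hline : x₁ + σ ^ 2 * y₁ + σ * z₁ = 0 := by
      linear_combination σ * hBσ + x₁ * huu
    exact ⟨σ, hσ3, Or.inr ⟨⟨x₀, hx0, rfl, hy, hz⟩, hline⟩⟩

theorem V2_description
    (k : Type*) [Field k] [IsAlgClosed k] [CharZero k]
    (x₀ y₀ z₀ x₁ y₁ z₁ : k)
    (hp₀ : ¬(x₀ = 0 ∧ y₀ = 0 ∧ z₀ = 0))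
    (hp₁ : ¬(x₁ = 0 ∧ y₁ = 0 ∧ z₁ = 0)) :
    (y₁ * z₀ + z₁ * y₀ + x₁ * x₀ = 0 ∧
     z₁ * x₀ + x₁ * z₀ + y₁ * y₀ = 0 ∧
     x₁ * y₀ + y₁ * x₀ + z₁ * z₀ = 0)
      ↔ ∃ ω : k, ω ^ 3 = 1 ∧
          ((x₀ + ω ^ 2 * y₀ + ω * z₀ = 0 ∧
              ∃ μ : k, μ ≠ 0 ∧ x₁ = μ ∧ y₁ = μ * ω ∧ z₁ = μ * ω ^ 2) ∨
           ((∃ μ : k, μ ≠ 0 ∧ x₀ = μ ∧ y₀ = μ * ω ∧ z₀ = μ * ω ^ 2) ∧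
              x₁ + ω ^ 2 * y₁ + ω * z₁ = 0)) := by
  constructor
  · rintro ⟨hf, hg, hh⟩
    -- a primitive cube root of unity
    obtain ⟨z3, hz3⟩ := IsAlgClosed.exists_pow_nat_eq (-3 : k) (n := 2) (by norm_num)
    obtain ⟨ζ, hζ⟩ : ∃ ζ : k, ζ ^ 2 + ζ + 1 = 0 :=
      ⟨(-1 + z3) / 2, by linear_combination (1/4 : k) * hz3⟩
    have hζ3 : ζ ^ 3 = 1 := by linear_combination (ζ - 1) * hζ
    -- determinant condition on p₀
    have hE : x₀ ^ 3 + y₀ ^ 3 + z₀ ^ 3 - 3 * (x₀ * y₀ * z₀) = 0 := by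
      by_contra hNE
      apply hp₁
      refine ⟨?_, ?_, ?_⟩
      · have h1 : (x₀ ^ 3 + y₀ ^ 3 + z₀ ^ 3 - 3 * (x₀ * y₀ * z₀)) * x₁ = 0 := by
          linear_combination (x₀ ^ 2 - y₀ * z₀) * hf + (z₀ ^ 2 - x₀ * y₀) * hg +
            (y₀ ^ 2 - x₀ * z₀) * hh
        exact (mul_eq_zero.mp h1).resolve_left hNE
      · have h1 : (x₀ ^ 3 + y₀ ^ 3 + z₀ ^ 3 - 3 * (x₀ * y₀ * z₀)) * y₁ = 0 := by
          linear_combination (z₀ ^ 2 - x₀ * y₀) * hf + (y₀ ^ 2 - x₀ * z₀) * hg +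
            (x₀ ^ 2 - y₀ * z₀) * hh
        exact (mul_eq_zero.mp h1).resolve_left hNE
      · have h1 : (x₀ ^ 3 + y₀ ^ 3 + z₀ ^ 3 - 3 * (x₀ * y₀ * z₀)) * z₁ = 0 := by
          linear_combination (y₀ ^ 2 - x₀ * z₀) * hf + (x₀ ^ 2 - y₀ * z₀) * hg +
            (z₀ ^ 2 - x₀ * y₀) * hh
        exact (mul_eq_zero.mp h1).resolve_left hNE
    have hfac : (x₀ + y₀ + z₀) * ((x₀ + ζ ^ 2 * y₀ + ζ * z₀) * (x₀ + ζ * y₀ + ζ ^ 2 * z₀)) = 0 := by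
      linear_combination hE + (-z₀ ^ 3 + z₀ ^ 3 * ζ + y₀ * z₀ ^ 2 * ζ ^ 2 + y₀ ^ 2 * z₀ * ζ ^ 2 -
        y₀ ^ 3 + y₀ ^ 3 * ζ + x₀ * z₀ ^ 2 * ζ + 3 * (x₀ * y₀ * z₀) - x₀ * y₀ * z₀ * ζ +
        x₀ * y₀ * z₀ * ζ ^ 2 + x₀ * y₀ ^ 2 * ζ + x₀ ^ 2 * z₀ + x₀ ^ 2 * y₀) * hζ
    obtain ⟨α, hα, hL⟩ : ∃ α : k, α ^ 3 = 1 ∧ x₀ + α ^ 2 * y₀ + α * z₀ = 0 := by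
      rcases mul_eq_zero.mp hfac with h | h
      · exact ⟨1, one_pow 3, by linear_combination h⟩
      · rcases mul_eq_zero.mp h with h' | h'
        · exact ⟨ζ, hζ3, by linear_combination h'⟩
        · exact ⟨ζ ^ 2, by linear_combination (ζ ^ 3 + 1) * hζ3,
            by linear_combination h' + ζ * y₀ * hζ3⟩
    exact V2_aux k α x₀ y₀ z₀ x₁ y₁ z₁ hα hL hp₀ hp₁ hf hg hh
  · rintro ⟨ω, hω, (⟨hLw, μ, hμ, hx1, hy1, hz1⟩ | ⟨⟨μ, hμ, hx0, hy0, hz0⟩, hl⟩)⟩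
    · subst hx1; subst hy1; subst hz1
      exact ⟨by linear_combination x₁ * hLw,
        by linear_combination x₁ * ω ^ 2 * hLw + (-(z₀ * x₁) - y₀ * x₁ * ω) * hω,
        by linear_combination x₁ * ω * hLw + (-(y₀ * x₁)) * hω⟩
    · subst hx0; subst hy0; subst hz0
      exact ⟨by linear_combination x₀ * hl,
        by linear_combination x₀ * ω ^ 2 * hl + (-(z₁ * x₀) - y₁ * x₀ * ω) * hω,
        by linear_combination x₀ * ω * hl + (-(y₁ * x₀)) * hω⟩
end

section
/- Consider bihomogeneous polynomials of bidegree (1,1) in the two groups of variables (x₀,y₀,z₀) and (x₁,y₁,z₁) over k (a 9-dimensional k-vector space). Such a polynomial P vanishes at every point of the truncated point scheme V₂ of S(1,1,1) if and only if P lies in the k-linear span of f₀ = y₁z₀ + z₁y₀ + x₁x₀, g₀ = z₁x₀ + x₁z₀ + y₁y₀, and h₀ = x₁y₀ + y₁x₀ + z₁z₀. In particular, the space of bidegree-(1,1) forms vanishing on V₂ has dimension 3 (that is, h⁰(𝒪_{ℙ²×ℙ²}-ideal sheaf of V₂ twisted by (1,1)) = 3). -/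
/-!
STATEMENT 13: A bihomogeneous polynomial `P` of bidegree `(1,1)` in the variables
`(x₀,y₀,z₀)` and `(x₁,y₁,z₁)` (encoded by its `3×3` coefficient array `C`, with
`P(v,w) = ∑ C m n · v m · w n`) vanishes at every point of the truncated point
scheme `V₂` of `S(1,1,1)` iff it lies in the `k`-span of `f₀, g₀, h₀`.  In particular
the space of bidegree-`(1,1)` forms vanishing on `V₂` has dimension `3`.
-/

open scoped BigOperators

/-- Evaluation of a bidegree-`(1,1)` form with coefficient array `C` at `(v, w)`. -/
def eval2 {k : Type*} [CommSemiring k] (C : Fin 3 → Fin 3 → k) (v w : Fin 3 → k) : k :=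
  ∑ m : Fin 3, ∑ n : Fin 3, C m n * v m * w n

/-- Coefficient array of `f₀ = y₁z₀ + z₁y₀ + x₁x₀`. -/
def Fc (k : Type*) [CommSemiring k] : Fin 3 → Fin 3 → k :=
  ![![1, 0, 0], ![0, 0, 1], ![0, 1, 0]]

/-- Coefficient array of `g₀ = z₁x₀ + x₁z₀ + y₁y₀`. -/
def Gc (k : Type*) [CommSemiring k] : Fin 3 → Fin 3 → k :=
  ![![0, 0, 1], ![0, 1, 0], ![1, 0, 0]]

/-- Coefficient array of `h₀ = x₁y₀ + y₁x₀ + z₁z₀`. -/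
def Hc (k : Type*) [CommSemiring k] : Fin 3 → Fin 3 → k :=
  ![![0, 1, 0], ![1, 0, 0], ![0, 0, 1]]

theorem bidegree_one_one_forms_vanishing_on_V2
    (k : Type*) [Field k] [IsAlgClosed k] [CharZero k] :
    (∀ C : Fin 3 → Fin 3 → k,
      (∀ v w : Fin 3 → k, v ≠ 0 → w ≠ 0 →
          (eval2 (Fc k) v w = 0 ∧ eval2 (Gc k) v w = 0 ∧ eval2 (Hc k) v w = 0) →
          eval2 C v w = 0)
        ↔ C ∈ Submodule.span k {Fc k, Gc k, Hc k}) ∧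
    LinearIndependent k ![Fc k, Gc k, Hc k] := by
  -- a primitive cube root of unity
  obtain ⟨z, hz'⟩ := IsAlgClosed.exists_root (k := k)
    (p := Polynomial.X ^ 2 + Polynomial.X + 1) (by
      rw [show (Polynomial.X ^ 2 + Polynomial.X + 1 : Polynomial k).degree = 2 by
        compute_degree!]
      decide)
  have hz : z ^ 2 + z + 1 = 0 := by simpa using hz'
  constructor
  · intro C
    constructor
    · intro h
      have hne1 : (![1, -1, 0] : Fin 3 → k) ≠ 0 := by
        intro hc; have := congrFun hc 0; simp at this
      have hne2 : (![1, 0, -1] : Fin 3 → k) ≠ 0 := by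
        intro hc; have := congrFun hc 0; simp at this
      have hne3 : (![1, -z, 0] : Fin 3 → k) ≠ 0 := by
        intro hc; have := congrFun hc 0; simp at this
      have hne4 : (![1, 0, -z^2] : Fin 3 → k) ≠ 0 := by
        intro hc; have := congrFun hc 0; simp at this
      have hne5 : (![1, -z^2, 0] : Fin 3 → k) ≠ 0 := by
        intro hc; have := congrFun hc 0; simp at this
      have hne6 : (![1, 0, -z] : Fin 3 → k) ≠ 0 := by
        intro hc; have := congrFun hc 0; simp at this
      have hnw1 : (![1, 1, 1] : Fin 3 → k) ≠ 0 := by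
        intro hc; have := congrFun hc 0; simp at this
      have hnw2 : (![1, z, z^2] : Fin 3 → k) ≠ 0 := by
        intro hc; have := congrFun hc 0; simp at this
      have hnw3 : (![1, z^2, z] : Fin 3 → k) ≠ 0 := by
        intro hc; have := congrFun hc 0; simp at this
      have e1 := h ![1, -1, 0] ![1, 1, 1] hne1 hnw1 (by
        refine ⟨?_, ?_, ?_⟩ <;>
          simp [eval2, Fc, Gc, Hc, Fin.sum_univ_three, Matrix.vecHead, Matrix.vecTail] <;> ring)
      have e2 := h ![1, 0, -1] ![1, 1, 1] hne2 hnw1 (by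
        refine ⟨?_, ?_, ?_⟩ <;>
          simp [eval2, Fc, Gc, Hc, Fin.sum_univ_three, Matrix.vecHead, Matrix.vecTail] <;> ring)
      have e3 := h ![1, -z, 0] ![1, z, z^2] hne3 hnw2 (by
        refine ⟨?_, ?_, ?_⟩ <;>
          simp [eval2, Fc, Gc, Hc, Fin.sum_univ_three, Matrix.vecHead, Matrix.vecTail] <;>
          (first | ring1 | linear_combination (1 - z) * hz | linear_combination (z - 1) * hz | linear_combination (z - z^2) * hz | linear_combination (z^2 - z) * hz))
      have e4 := h ![1, 0, -z^2] ![1, z, z^2] hne4 hnw2 (by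
        refine ⟨?_, ?_, ?_⟩ <;>
          simp [eval2, Fc, Gc, Hc, Fin.sum_univ_three, Matrix.vecHead, Matrix.vecTail] <;>
          (first | ring1 | linear_combination (1 - z) * hz | linear_combination (z - 1) * hz | linear_combination (z - z^2) * hz | linear_combination (z^2 - z) * hz))
      have e5 := h ![1, -z^2, 0] ![1, z^2, z] hne5 hnw3 (by
        refine ⟨?_, ?_, ?_⟩ <;>
          simp [eval2, Fc, Gc, Hc, Fin.sum_univ_three, Matrix.vecHead, Matrix.vecTail] <;>
          (first | ring1 | linear_combination (1 - z) * hz | linear_combination (z - 1) * hz | linear_combination (z - z^2) * hz | linear_combination (z^2 - z) * hz))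
      have e6 := h ![1, 0, -z] ![1, z^2, z] hne6 hnw3 (by
        refine ⟨?_, ?_, ?_⟩ <;>
          simp [eval2, Fc, Gc, Hc, Fin.sum_univ_three, Matrix.vecHead, Matrix.vecTail] <;>
          (first | ring1 | linear_combination (1 - z) * hz | linear_combination (z - 1) * hz | linear_combination (z - z^2) * hz | linear_combination (z^2 - z) * hz))
      simp only [eval2, Fin.sum_univ_three, Matrix.cons_val_zero, Matrix.cons_val_one,
        Matrix.head_cons, Matrix.cons_val_two, Matrix.tail_cons] at e1 e2 e3 e4 e5 e6
      have h10 : C 1 0 = C 0 1 := by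
        linear_combination -(((1/3 : k)) * e1 + ((1/3 : k) * z^2) * e3 + ((1/3 : k) * z) * e5 + ((((-1/3 : k)) * C 0 0) + (((-2/3 : k) * z + (2/3 : k)) * C 0 1) + (((-1/3 : k) * z^2 + (1/3 : k) * z + (-1/3 : k)) * C 0 2) + (((2/3 : k) * z + (-2/3 : k)) * C 1 0) + (((1/3 : k) * z^3 + (-1/3 : k) * z + (1/3 : k)) * C 1 1) + (((1/3 : k) * z^3 + (-1/3 : k) * z + (1/3 : k)) * C 1 2)) * hz)
      have h11 : C 1 1 = C 0 2 := by
        linear_combination -(((1/3 : k)) * e1 + ((1/3 : k) * z) * e3 + ((1/3 : k) * z^2) * e5 + ((((-1/3 : k)) * C 0 0) + (((-1/3 : k) * z^2 + (1/3 : k) * z + (-1/3 : k)) * C 0 1) + (((-2/3 : k) * z + (2/3 : k)) * C 0 2) + (((1/3 : k) * z^2 + (-1/3 : k) * z + (1/3 : k)) * C 1 0) + (((1/3 : k) * z^4 + (-1/3 : k) * z^3 + (2/3 : k) * z + (-2/3 : k)) * C 1 1) + (((1/3 : k) * z^3 + (-1/3 : k) * z + (1/3 : k)) * C 1 2)) *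 hz)
      have h12 : C 1 2 = C 0 0 := by
        linear_combination -(((1/3 : k)) * e1 + ((1/3 : k)) * e3 + ((1/3 : k)) * e5 + ((((-1/3 : k)) * C 0 1) + (((-1/3 : k)) * C 0 2) + (((1/3 : k)) * C 1 0) + (((1/3 : k) * z^2 + (-1/3 : k) * z + (1/3 : k)) * C 1 1) + (((2/3 : k) * z + (-2/3 : k)) * C 1 2)) * hz)
      have h20 : C 2 0 = C 0 2 := by
        linear_combination -(((1/3 : k)) * e2 + ((1/3 : k) * z) * e4 + ((1/3 : k) * z^2) * e6 + ((((-1/3 : k)) * C 0 0) + (((-1/3 : k) * z^2 + (1/3 : k) * z + (-1/3 : k)) * C 0 1) + (((-2/3 : k) * z + (2/3 : k)) * C 0 2) + (((2/3 : k) * z + (-2/3 : k)) * C 2 0) + (((1/3 : k) * z^3 + (-1/3 : k) * z + (1/3 : k)) * C 2 1) + (((1/3 : k) * z^3 + (-1/3 : k) * z + (1/3 : k)) * C 2 2)) * hz)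
      have h21 : C 2 1 = C 0 0 := by
        linear_combination -(((1/3 : k)) * e2 + ((1/3 : k)) * e4 + ((1/3 : k)) * e6 + ((((-1/3 : k)) * C 0 1) + (((-1/3 : k)) * C 0 2) + (((1/3 : k)) * C 2 0) + (((2/3 : k) * z + (-2/3 : k)) * C 2 1) + (((1/3 : k) * z^2 + (-1/3 : k) * z + (1/3 : k)) * C 2 2)) * hz)
      have h22 : C 2 2 = C 0 1 := by
        linear_combination -(((1/3 : k)) * e2 + ((1/3 : k) * z^2) * e4 + ((1/3 : k) * z) * e6 + ((((-1/3 : k)) * C 0 0) + (((-2/3 : k) * z + (2/3 : k)) * C 0 1) + (((-1/3 : k) * z^2 + (1/3 : k) * z + (-1/3 : k)) * C 0 2) + (((1/3 : k) * z^2 + (-1/3 : k) * z + (1/3 : k)) * C 2 0) + (((1/3 : k) * z^3 + (-1/3 : k) * z + (1/3 : k)) * C 2 1) + (((1/3 : k) * z^4 + (-1/3 : k) * z^3 + (2/3 : k) * z + (-2/3 : k)) * C 2 2)) * hz)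
      have key : C = C 0 0 • Fc k + C 0 2 • Gc k + C 0 1 • Hc k := by
        funext i j
        fin_cases i <;> fin_cases j <;>
          simp [Fc, Gc, Hc, h10, h11, h12, h20, h21, h22]
      rw [key]
      refine Submodule.add_mem _ (Submodule.add_mem _ ?_ ?_) ?_ <;>
        refine Submodule.smul_mem _ _ (Submodule.subset_span ?_) <;> simp
    · intro hC v w hv hw hvw
      induction hC using Submodule.span_induction with
      | mem x hx =>
          rcases hx with h | h | h <;> subst h
          · exact hvw.1
          · exact hvw.2.1
          · exact hvw.2.2
      | zero => simp [eval2]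
      | add x y _ _ hx hy =>
          have : eval2 (x + y) v w = eval2 x v w + eval2 y v w := by
            simp only [eval2, Pi.add_apply, add_mul, Finset.sum_add_distrib]
          rw [this, hx, hy, add_zero]
      | smul a x _ hx =>
          have : eval2 (a • x) v w = a * eval2 x v w := by
            simp only [eval2, Pi.smul_apply, smul_eq_mul, Finset.mul_sum, mul_assoc]
          rw [this, hx, mul_zero]
  · rw [Fintype.linearIndependent_iff]
    intro g hg i
    have h0 := congrFun (congrFun hg 0) 0
    have h1 := congrFun (congrFun hg 0) 1
    have h2 := congrFun (congrFun hg 0) 2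
    simp [Fin.sum_univ_three, Fc, Gc, Hc, Matrix.vecHead, Matrix.vecTail] at h0 h1 h2
    fin_cases i <;> simpa using ‹_›
end

section
/- In the formal power series ring ℤ⟦t⟧, set H = 1 + Σ_{d≥1} (3·(2^⌈(d−1)/2⌉ + 2^⌊(d+1)/2⌋) − 6)·t^d (the Hilbert series of the point parameter ring B of a degenerate Sklyanin algebra, whose coefficients are dim_k B_d). Then H·(1 − 2t²)·(1 − t) = (1 + t²)·(1 + 2t); that is, H_B(t) = (1+t²)(1+2t) / ((1−2t²)(1−t)). -/
/-!
STATEMENT 15: In `ℤ⟦t⟧`, the Hilbert series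
`H = 1 + Σ_{d≥1} (3·(2^⌈(d−1)/2⌉ + 2^⌊(d+1)/2⌋) − 6)·t^d` of the point parameter ring
`B` of a degenerate Sklyanin algebra satisfies
`H·(1 − 2t²)·(1 − t) = (1 + t²)·(1 + 2t)`, i.e.
`H_B(t) = (1+t²)(1+2t)/((1−2t²)(1−t))`.  (For `d ≥ 1`, `⌈(d−1)/2⌉ = d/2` and
`⌊(d+1)/2⌋ = (d+1)/2` in natural division.)
-/

open PowerSeries

/-- The Hilbert series of the point parameter ring `B`: constant coefficient `1` and
`d`-th coefficient `3·(2^⌈(d−1)/2⌉ + 2^⌊(d+1)/2⌋) − 6` for `d ≥ 1`. -/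
noncomputable def hilbertB : PowerSeries ℤ :=
  PowerSeries.mk fun d =>
    if d = 0 then 1 else 3 * ((2 : ℤ) ^ (d / 2) + 2 ^ ((d + 1) / 2)) - 6


noncomputable def auxF : PowerSeries ℤ := PowerSeries.mk fun n => (2 : ℤ) ^ (n / 2)
noncomputable def auxG : PowerSeries ℤ := PowerSeries.mk fun n => (2 : ℤ) ^ ((n + 1) / 2)
noncomputable def auxC : PowerSeries ℤ := PowerSeries.mk fun _ => (1 : ℤ)

lemma auxF_mul : auxF * (1 - 2 * (X : PowerSeries ℤ) ^ 2) = 1 + X := by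
  have h : auxF * (1 - 2 * (X : PowerSeries ℤ) ^ 2)
      = auxF - auxF * X ^ 2 - auxF * X ^ 2 := by ring
  rw [h]
  ext n
  simp only [map_sub, coeff_mul_X_pow']
  match n with
  | 0 => simp [auxF]
  | 1 => simp [auxF, coeff_one]
  | (k+2) =>
    rw [if_pos (by omega)]
    have h2 : (k + 2) / 2 = k / 2 + 1 := by omega
    have h3 : k + 2 - 2 = k := by omega
    have h4 : coeff (k+2) (1 + X : PowerSeries ℤ) = 0 := by
      simp [coeff_one, coeff_X, two_mul]
    simp only [auxF, coeff_mk, h2, h3, h4, pow_succ]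
    ring

lemma auxG_mul : auxG * (1 - 2 * (X : PowerSeries ℤ) ^ 2) = 1 + 2 * X := by
  have h : auxG * (1 - 2 * (X : PowerSeries ℤ) ^ 2)
      = auxG - auxG * X ^ 2 - auxG * X ^ 2 := by ring
  rw [h]
  ext n
  simp only [map_sub, coeff_mul_X_pow']
  match n with
  | 0 => simp [auxG]
  | 1 => simp [auxG, coeff_one, two_mul, coeff_X]
  | (k+2) =>
    rw [if_pos (by omega)]
    have h2 : (k + 2 + 1) / 2 = (k + 1) / 2 + 1 := by omega
    have h3 : k + 2 - 2 = k := by omega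
    have h4 : coeff (k+2) (1 + 2 * X : PowerSeries ℤ) = 0 := by
      simp [coeff_one, coeff_X, two_mul]
    simp only [auxG, coeff_mk, h2, h3, h4, pow_succ]
    ring

lemma auxC_mul : auxC * (1 - (X : PowerSeries ℤ)) = 1 := by
  have h : auxC * (1 - (X : PowerSeries ℤ)) = auxC - auxC * X ^ 1 := by ring
  rw [h]
  ext n
  rw [map_sub, coeff_mul_X_pow']
  match n with
  | 0 => simp [auxC]
  | (k+1) => simp [auxC, coeff_one]

lemma hilbertB_eq : hilbertB = PowerSeries.C (3 : ℤ) * auxF + PowerSeries.C (3 : ℤ) * auxG - PowerSeries.C (6 : ℤ) * auxC + 1 := by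
  ext n
  rw [map_add, map_sub, map_add, coeff_C_mul, coeff_C_mul, coeff_C_mul]
  simp only [hilbertB, auxF, auxG, auxC, coeff_mk, coeff_one]
  match n with
  | 0 => norm_num
  | (k+1) =>
    rw [if_neg (by omega), if_neg (by omega)]
    ring

lemma C3 : (PowerSeries.C (3 : ℤ) : PowerSeries ℤ) = 3 := by simp
lemma C6 : (PowerSeries.C (6 : ℤ) : PowerSeries ℤ) = 6 := by simp

theorem hilbert_series_of_B :
    hilbertB * ((1 - 2 * (PowerSeries.X : PowerSeries ℤ) ^ 2) * (1 - PowerSeries.X))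
      = (1 + (PowerSeries.X : PowerSeries ℤ) ^ 2) * (1 + 2 * PowerSeries.X) := by
  rw [hilbertB_eq, C3, C6]
  linear_combination (3 * (1 - (X : PowerSeries ℤ))) * auxF_mul
    + (3 * (1 - (X : PowerSeries ℤ))) * auxG_mul
    - (6 * (1 - 2 * (X : PowerSeries ℤ) ^ 2)) * auxC_mul
end
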